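/- arXiv:1705.02920 — 7 statements merged into one kernel-verified Lean document; each statement's English description precedes it below -/
import Mathlib

section
/- Let Δ ⊂ ℝ² be the triangle with vertices (−1,0), (0,−1/2), (3,1). For every real ξ ≠ 0, ∫_Δ u₂ e^{ξ u₁} du₁ du₂ = (1/(16ξ³)) · ((4ξ−3)e^{3ξ} + 8ξ + 3e^{−ξ}). -/
open MeasureTheory


noncomputable def S4 : Set (ℝ × ℝ) :=
  {p | (p.1 - 1)/2 ≤ p.2 ∧ -(p.1 + 1)/2 ≤ p.2 ∧ p.2 ≤ (p.1 + 1)/4}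

noncomputable def lo4 (x : ℝ) : ℝ := max ((x - 1)/2) (-(x + 1)/2)

noncomputable def h4 (ξ x : ℝ) : ℝ :=
  Real.exp (ξ*x) * ((((x + 1)/4)^2 - (lo4 x)^2) / 2)

lemma slice4 (x : ℝ) : {y : ℝ | (x, y) ∈ S4} = Set.Icc (lo4 x) ((x + 1)/4) := by
  ext y
  simp [S4, lo4, Set.mem_Icc, max_le_iff, and_assoc]

lemma inner4 (ξ x : ℝ) :
    (∫ y, S4.indicator (fun u : ℝ × ℝ => u.2 * Real.exp (ξ * u.1)) (x, y)) =
      (Set.Icc (-1 : ℝ) 3).indicator (h4 ξ) x := by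
  have hmem : ∀ y : ℝ, (x, y) ∈ S4 ↔ y ∈ Set.Icc (lo4 x) ((x + 1)/4) := by
    intro y; rw [← slice4]; rfl
  have : (fun y => S4.indicator (fun u : ℝ × ℝ => u.2 * Real.exp (ξ * u.1)) (x, y)) =
      (Set.Icc (lo4 x) ((x + 1)/4)).indicator (fun y => y * Real.exp (ξ * x)) := by
    classical
    funext y
    rw [Set.indicator_apply, Set.indicator_apply]
    simp only [hmem y]
  rw [this, MeasureTheory.integral_indicator measurableSet_Icc]
  by_cases hx : x ∈ Set.Icc (-1 : ℝ) 3
  · obtain ⟨hx1, hx2⟩ := hx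
    have hle : lo4 x ≤ (x + 1)/4 := by
      apply max_le <;> linarith
    rw [Set.indicator_of_mem (Set.mem_Icc.mpr ⟨hx1, hx2⟩), integral_Icc_eq_integral_Ioc,
      ← intervalIntegral.integral_of_le hle, intervalIntegral.integral_mul_const,
      h4]
    rw [show (∫ t in lo4 x..(x + 1)/4, t) = (((x+1)/4)^2 - (lo4 x)^2)/2 from
      integral_id]
    ring
  · have hlt : (x + 1)/4 < lo4 x := by
      rcases not_and_or.mp (Set.mem_Icc.not.mp hx) with h | h
      · push_neg at h
        calc (x + 1)/4 < -(x + 1)/2 := by linarith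
          _ ≤ lo4 x := le_max_right _ _
      · push_neg at h
        calc (x + 1)/4 < (x - 1)/2 := by linarith
          _ ≤ lo4 x := le_max_left _ _
    rw [Set.Icc_eq_empty (not_le.mpr hlt), Set.indicator_of_notMem hx]
    simp

lemma hull_eq4 :
    convexHull ℝ {((-1 : ℝ), (0 : ℝ)), (0, -1/2), (3, 1)} = S4 := by
  apply Set.Subset.antisymm
  · apply convexHull_min
    · rintro p hp
      simp only [Set.mem_insert_iff, Set.mem_singleton_iff] at hp
      rcases hp with rfl | rfl | rfl <;> constructor <;> norm_num
    · rintro p hp q hq a b ha hb hab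
      obtain ⟨hp1, hp2, hp3⟩ := hp
      obtain ⟨hq1, hq2, hq3⟩ := hq
      refine ⟨?_, ?_, ?_⟩ <;>
        simp only [Prod.fst_add, Prod.snd_add, Prod.smul_fst, Prod.smul_snd,
          smul_eq_mul] <;> nlinarith
  · rintro ⟨x, y⟩ ⟨h1, h2, h3⟩
    have hsum : ((x, y) : ℝ × ℝ) = ∑ i : Fin 3,
        (![1/2 - x/2 + y, (1 + x - 4*y)/3, (1/2 + x/2 + y)/3] : Fin 3 → ℝ) i •
        (![((-1 : ℝ), (0 : ℝ)), (0, -1/2), (3, 1)] : Fin 3 → ℝ × ℝ) i := by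
      simp [Fin.sum_univ_three, Prod.ext_iff, Prod.smul_mk]
      constructor <;> ring
    rw [hsum]
    exact (convex_convexHull ℝ
        ({((-1 : ℝ), (0 : ℝ)), (0, -1/2), (3, 1)} : Set (ℝ × ℝ))).sum_mem
      (by intro i _; fin_cases i <;> simp <;> linarith)
      (by simp [Fin.sum_univ_three]; ring)
      (by intro i _; fin_cases i <;>
          · apply subset_convexHull; simp)

lemma poly_exp_integral (ξ a b c lo hi : ℝ) (hξ : ξ ≠ 0) :
    ∫ x in lo..hi, Real.exp (ξ*x) * (a*x^2 + b*x + c) =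
      (Real.exp (ξ*hi) * ((a*hi^2 + b*hi + c)/ξ - (2*a*hi + b)/ξ^2 + 2*a/ξ^3)) -
      (Real.exp (ξ*lo) * ((a*lo^2 + b*lo + c)/ξ - (2*a*lo + b)/ξ^2 + 2*a/ξ^3)) := by
  have key : ∀ x : ℝ, HasDerivAt
      (fun x => Real.exp (ξ*x) * ((a*x^2 + b*x + c)/ξ - (2*a*x + b)/ξ^2 + 2*a/ξ^3))
      (Real.exp (ξ*x) * (a*x^2 + b*x + c)) x := by
    intro x
    have he : HasDerivAt (fun x : ℝ => Real.exp (ξ*x)) (Real.exp (ξ*x) * ξ) x := by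
      simpa using ((hasDerivAt_id x).const_mul ξ).exp
    have hx2 : HasDerivAt (fun x : ℝ => x^2) (2*x) x := by
      simpa using hasDerivAt_pow 2 x
    have hp : HasDerivAt
        (fun x : ℝ => (a*x^2 + b*x + c)/ξ - (2*a*x + b)/ξ^2 + 2*a/ξ^3)
        ((a*(2*x) + b)/ξ - (2*a)/ξ^2) x := by
      have h1 : HasDerivAt (fun x : ℝ => (a*x^2 + b*x + c)/ξ) ((a*(2*x) + b*1)/ξ) x :=
        (((hx2.const_mul a).add ((hasDerivAt_id x).const_mul b)).add_const c).div_const ξ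
      have h2 : HasDerivAt (fun x : ℝ => (2*a*x + b)/ξ^2) ((2*a*1)/ξ^2) x :=
        (((hasDerivAt_id x).const_mul (2*a)).add_const b).div_const (ξ^2)
      have := (h1.sub h2).add_const (2*a/ξ^3)
      exact this.congr_deriv (by ring)
    have := he.mul hp
    refine this.congr_deriv ?_
    field_simp
    ring
  have hcont : Continuous fun x => Real.exp (ξ*x) * (a*x^2 + b*x + c) := by
    continuity
  rw [intervalIntegral.integral_eq_sub_of_hasDerivAt (fun x _ => key x)
    (hcont.intervalIntegrable lo hi)]


theorem stmt4 (ξ : ℝ) (hξ : ξ ≠ 0) :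
    (∫ u in convexHull ℝ {((-1 : ℝ), (0 : ℝ)), (0, -1/2), (3, 1)},
        u.2 * Real.exp (ξ * u.1)) =
      (1/(16*ξ^3)) * ((4*ξ-3)*Real.exp (3*ξ) + 8*ξ + 3*Real.exp (-ξ)) := by
  have hcompact : IsCompact (convexHull ℝ
      ({((-1 : ℝ), (0 : ℝ)), (0, -1/2), (3, 1)} : Set (ℝ × ℝ))) :=
    (((Set.finite_singleton _).insert _).insert _).isCompact_convexHull ℝ
  have hS : MeasurableSet S4 := by
    rw [← hull_eq4]; exact hcompact.isClosed.measurableSet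
  have hcont : Continuous fun u : ℝ × ℝ => u.2 * Real.exp (ξ * u.1) := by fun_prop
  have hint : IntegrableOn (fun u : ℝ × ℝ => u.2 * Real.exp (ξ * u.1)) S4 := by
    rw [← hull_eq4]; exact hcont.continuousOn.integrableOn_compact hcompact
  rw [hull_eq4, ← MeasureTheory.integral_indicator hS]
  rw [show (volume : Measure (ℝ × ℝ)) = (volume : Measure ℝ).prod volume from
    (MeasureTheory.Measure.volume_eq_prod ℝ ℝ)]
  rw [MeasureTheory.integral_prod _
    ((integrable_indicator_iff hS).mpr ((MeasureTheory.Measure.volume_eq_prod ℝ ℝ) ▸ hint))]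
  simp_rw [inner4 ξ]
  rw [MeasureTheory.integral_indicator measurableSet_Icc,
    MeasureTheory.integral_Icc_eq_integral_Ioc,
    ← intervalIntegral.integral_of_le (by norm_num : (-1:ℝ) ≤ 3)]
  have hcont_h : Continuous (h4 ξ) := by
    apply Continuous.mul (by fun_prop)
    apply Continuous.div_const
    apply Continuous.sub (by fun_prop)
    exact ((by fun_prop : Continuous fun x : ℝ => (x-1)/2).max (by fun_prop)).pow 2
  rw [← intervalIntegral.integral_add_adjacent_intervals
    (hcont_h.intervalIntegrable (-1) 0) (hcont_h.intervalIntegrable 0 3)]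
  have e1 : ∫ x in (-1:ℝ)..0, h4 ξ x =
      ∫ x in (-1:ℝ)..0, Real.exp (ξ*x) * ((-3/32)*x^2 + (-3/16)*x + (-3/32)) := by
    apply intervalIntegral.integral_congr
    intro x hx
    rw [Set.uIcc_of_le (by norm_num : (-1:ℝ) ≤ 0), Set.mem_Icc] at hx
    have : lo4 x = -(x + 1)/2 := by rw [lo4]; exact max_eq_right (by linarith)
    simp only [h4, this]
    ring
  have e2 : ∫ x in (0:ℝ)..3, h4 ξ x =
      ∫ x in (0:ℝ)..3, Real.exp (ξ*x) * ((-3/32)*x^2 + (5/16)*x + (-3/32)) := by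
    apply intervalIntegral.integral_congr
    intro x hx
    rw [Set.uIcc_of_le (by norm_num : (0:ℝ) ≤ 3), Set.mem_Icc] at hx
    have : lo4 x = (x - 1)/2 := by rw [lo4]; exact max_eq_left (by linarith)
    simp only [h4, this]
    ring
  rw [e1, e2, poly_exp_integral _ _ _ _ _ _ hξ, poly_exp_integral _ _ _ _ _ _ hξ]
  rw [show ξ * (0:ℝ) = 0 by ring, show ξ * (-1:ℝ) = -ξ by ring,
    show ξ * (3:ℝ) = 3*ξ by ring, Real.exp_zero]
  field_simp
  ring
end

section
/- Let Δ ⊂ ℝⁿ be a compact convex set with nonempty interior containing the origin 0 in its interior. Then there exists a unique ξ ∈ ℝⁿ such that ∫_Δ u · e^{⟨ξ,u⟩} du = 0 (as a vector-valued integral). -/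
open MeasureTheory
open scoped RealInnerProductSpace

private lemma cap_lemma {n : ℕ} (w : EuclideanSpace ℝ (Fin n)) (hw : w ≠ 0) {r : ℝ}
    (hr : 0 < r) :
    ∀ u ∈ Metric.closedBall ((r/2) • (‖w‖⁻¹ • w)) (r/4),
      ‖w‖ * (r/4) ≤ ⟪w, u⟫ ∧ ‖u‖ < r := by
  intro u hu
  set v : EuclideanSpace ℝ (Fin n) := ‖w‖⁻¹ • w with hv
  have hvnorm : ‖v‖ = 1 := norm_smul_inv_norm hw
  have hd : ‖u - (r/2) • v‖ ≤ r/4 := by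
    have := Metric.mem_closedBall.1 hu
    rwa [dist_eq_norm] at this
  have hwpos : 0 < ‖w‖ := norm_pos_iff.2 hw
  constructor
  · have h1 : ⟪w, u⟫ = ⟪w, (r/2) • v⟫ + ⟪w, u - (r/2) • v⟫ := by
      rw [← inner_add_right]
      norm_num
    have h2 : ⟪w, (r/2) • v⟫ = (r/2) * ‖w‖ := by
      rw [real_inner_smul_right, hv, real_inner_smul_right,
        real_inner_self_eq_norm_mul_norm]
      field_simp
    have h3 : |⟪w, u - (r/2) • v⟫| ≤ ‖w‖ * (r/4) := by
      refine (abs_real_inner_le_norm _ _).trans ?_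
      exact mul_le_mul_of_nonneg_left hd (norm_nonneg w)
    have h4 : -(‖w‖ * (r/4)) ≤ ⟪w, u - (r/2) • v⟫ := neg_le_of_abs_le h3
    rw [h1, h2]
    nlinarith [hwpos, hr]
  · have : ‖u‖ ≤ ‖(r/2) • v‖ + ‖u - (r/2) • v‖ := by
      have := norm_add_le ((r/2) • v) (u - (r/2) • v)
      simpa using this
    have h5 : ‖(r/2) • v‖ = r/2 := by
      rw [norm_smul, hvnorm, mul_one, Real.norm_eq_abs,
        abs_of_pos (by linarith : (0:ℝ) < r/2)]
    linarith

set_option maxHeartbeats 1000000 in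
set_option synthInstance.maxHeartbeats 400000 in
theorem stmt8 (n : ℕ) (Δ : Set (EuclideanSpace ℝ (Fin n))) (hc : IsCompact Δ)
    (hconv : Convex ℝ Δ) (hint : (interior Δ).Nonempty)
    (h0 : (0 : EuclideanSpace ℝ (Fin n)) ∈ interior Δ) :
    ∃! ξ : EuclideanSpace ℝ (Fin n),
      (∫ u in Δ, Real.exp ⟪ξ, u⟫ • u) = 0 := by
  classical
  -- ball inside Δ
  obtain ⟨r, hr0, hrΔ'⟩ := Metric.isOpen_iff.1 isOpen_interior 0 h0
  have hrΔ : Metric.ball (0 : (EuclideanSpace ℝ (Fin n))) r ⊆ Δ := hrΔ'.trans interior_subset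
  have hmeasΔ : MeasurableSet Δ := hc.measurableSet
  have hvolΔ : volume Δ < ⊤ := hc.measure_lt_top
  -- continuity and integrability facts
  have cont_exp : ∀ ξ : (EuclideanSpace ℝ (Fin n)), Continuous fun u : (EuclideanSpace ℝ (Fin n)) => Real.exp ⟪ξ, u⟫ := fun ξ =>
    Real.continuous_exp.comp (continuous_const.inner continuous_id)
  have hInt : ∀ ξ : (EuclideanSpace ℝ (Fin n)), IntegrableOn (fun u => Real.exp ⟪ξ, u⟫) Δ := fun ξ =>
    (cont_exp ξ).continuousOn.integrableOn_compact hc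
  have hIntV : ∀ ξ : (EuclideanSpace ℝ (Fin n)), IntegrableOn (fun u => Real.exp ⟪ξ, u⟫ • u) Δ := fun ξ =>
    ((cont_exp ξ).smul continuous_id).continuousOn.integrableOn_compact hc
  have hIntL : ∀ ξ : (EuclideanSpace ℝ (Fin n)),
      IntegrableOn (fun u => Real.exp ⟪ξ, u⟫ • (innerSL ℝ u : (EuclideanSpace ℝ (Fin n)) →L[ℝ] ℝ)) Δ := fun ξ =>
    ((cont_exp ξ).smul (innerSL ℝ : (EuclideanSpace ℝ (Fin n)) →L[ℝ] (EuclideanSpace ℝ (Fin n)) →L[ℝ] ℝ).continuous).continuousOn.integrableOn_compact hc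
  set F : (EuclideanSpace ℝ (Fin n)) → ℝ := fun ξ => ∫ u in Δ, Real.exp ⟪ξ, u⟫ with hFdef
  -- pointwise derivative
  have hptderiv : ∀ (u x : (EuclideanSpace ℝ (Fin n))),
      HasFDerivAt (fun x : (EuclideanSpace ℝ (Fin n)) => Real.exp ⟪x, u⟫)
        (Real.exp ⟪x, u⟫ • (innerSL ℝ u : (EuclideanSpace ℝ (Fin n)) →L[ℝ] ℝ)) x := by
    intro u x
    have h1 : (fun x : (EuclideanSpace ℝ (Fin n)) => ⟪x, u⟫) = fun x : (EuclideanSpace ℝ (Fin n)) => (innerSL ℝ u : (EuclideanSpace ℝ (Fin n)) →L[ℝ] ℝ) x := by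
      funext x
      rw [innerSL_apply_apply]
      exact real_inner_comm u x
    have h2 : HasFDerivAt (fun x : (EuclideanSpace ℝ (Fin n)) => ⟪x, u⟫) (innerSL ℝ u : (EuclideanSpace ℝ (Fin n)) →L[ℝ] ℝ) x := by
      rw [h1]; exact (innerSL ℝ u : (EuclideanSpace ℝ (Fin n)) →L[ℝ] ℝ).hasFDerivAt
    exact h2.exp
  -- derivative of F
  obtain ⟨M, hM0, hMΔ⟩ : ∃ M > 0, Δ ⊆ Metric.closedBall 0 M := by
    obtain ⟨M, h⟩ := hc.isBounded.subset_closedBall_lt 0 0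
    exact ⟨M, h.1, h.2⟩
  have hF' : ∀ ξ₀ : (EuclideanSpace ℝ (Fin n)), HasFDerivAt F
      (∫ u in Δ, Real.exp ⟪ξ₀, u⟫ • (innerSL ℝ u : (EuclideanSpace ℝ (Fin n)) →L[ℝ] ℝ)) ξ₀ := by
    intro ξ₀
    apply hasFDerivAt_integral_of_dominated_of_fderiv_le
      (F' := fun (x : (EuclideanSpace ℝ (Fin n))) (u : (EuclideanSpace ℝ (Fin n))) => Real.exp ⟪x, u⟫ • (innerSL ℝ u : (EuclideanSpace ℝ (Fin n)) →L[ℝ] ℝ))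
      (bound := fun _ => Real.exp ((‖ξ₀‖ + 1) * M) * M) (s := Metric.ball ξ₀ 1) (Metric.ball_mem_nhds _ one_pos)
    · exact Filter.Eventually.of_forall fun x => (cont_exp x).aestronglyMeasurable
    · exact hInt ξ₀
    · exact (((cont_exp ξ₀).smul
        (innerSL ℝ : (EuclideanSpace ℝ (Fin n)) →L[ℝ] (EuclideanSpace ℝ (Fin n)) →L[ℝ] ℝ).continuous)).aestronglyMeasurable
    · refine ae_restrict_of_forall_mem hmeasΔ fun u hu x hx => ?_
      have hu' : ‖u‖ ≤ M := by
        have := hMΔ hu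
        rwa [Metric.mem_closedBall, dist_zero_right] at this
      have hx' : ‖x‖ ≤ ‖ξ₀‖ + 1 := by
        have := Metric.mem_ball.1 hx
        have h := norm_le_norm_add_norm_sub' x ξ₀
        rw [dist_eq_norm] at this
        have : ‖x - ξ₀‖ ≤ 1 := this.le
        linarith
      refine (ContinuousLinearMap.opNorm_le_bound _ (by positivity) fun y => ?_).trans
        le_rfl
      have h1 : ⟪x, u⟫ ≤ (‖ξ₀‖ + 1) * M := by
        calc ⟪x, u⟫ ≤ ‖x‖ * ‖u‖ := real_inner_le_norm x u
          _ ≤ (‖ξ₀‖ + 1) * M :=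
            mul_le_mul hx' hu' (norm_nonneg u) (by positivity)
      have h2 : ‖(Real.exp ⟪x, u⟫ • (innerSL ℝ u : (EuclideanSpace ℝ (Fin n)) →L[ℝ] ℝ)) y‖
          = Real.exp ⟪x, u⟫ * ‖⟪u, y⟫‖ := by
        simp [ContinuousLinearMap.smul_apply, norm_mul, Real.norm_eq_abs,
          abs_of_pos (Real.exp_pos _), abs_mul]
      rw [h2]
      have h3 : ‖⟪u, y⟫‖ ≤ M * ‖y‖ := by
        refine (norm_inner_le_norm u y).trans ?_
        exact mul_le_mul_of_nonneg_right hu' (norm_nonneg y)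
      calc Real.exp ⟪x, u⟫ * ‖⟪u, y⟫‖
          ≤ Real.exp ((‖ξ₀‖ + 1) * M) * (M * ‖y‖) :=
            mul_le_mul (Real.exp_le_exp.2 h1) h3 (norm_nonneg _) (Real.exp_pos _).le
        _ = Real.exp ((‖ξ₀‖ + 1) * M) * M * ‖y‖ := by ring
    · exact integrableOn_const hvolΔ.ne
    · exact Filter.Eventually.of_forall fun u x _ => hptderiv u x
  have hFcont : Continuous F := by
    rw [continuous_iff_continuousAt]
    exact fun x => (hF' x).continuousAt
  -- coercivity
  set c0 : ℝ := (volume (Metric.closedBall (0 : (EuclideanSpace ℝ (Fin n))) (r/4))).toReal with hc0def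
  have hc0pos : 0 < c0 := by
    apply ENNReal.toReal_pos
    · exact (Metric.measure_closedBall_pos volume 0 (by linarith)).ne'
    · exact measure_closedBall_lt_top.ne
  have hcoer : ∀ ξ : (EuclideanSpace ℝ (Fin n)), c0 * Real.exp (r/4 * ‖ξ‖) ≤ F ξ := by
    intro ξ
    by_cases hξ : ξ = 0
    · subst hξ
      simp only [norm_zero, mul_zero, Real.exp_zero, mul_one]
      have hsub : Metric.closedBall (0 : (EuclideanSpace ℝ (Fin n))) (r/4) ⊆ Δ := by
        refine (Metric.closedBall_subset_ball (by linarith)).trans hrΔ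
      have : F 0 = (volume Δ).toReal := by
        simp only [hFdef, inner_zero_left, Real.exp_zero]
        rw [setIntegral_const, smul_eq_mul, mul_one, measureReal_def]
      rw [this]
      exact ENNReal.toReal_le_toReal measure_closedBall_lt_top.ne hvolΔ.ne
        |>.2 (measure_mono hsub)
    · set B := Metric.closedBall ((r/2) • (‖ξ‖⁻¹ • ξ)) (r/4) with hBdef
      have hcap := cap_lemma ξ hξ hr0
      have hBΔ : B ⊆ Δ := fun u hu => hrΔ (Metric.mem_ball.2 (by
        rw [dist_zero_right]; exact (hcap u hu).2))
      have hvolB : volume B = volume (Metric.closedBall (0 : (EuclideanSpace ℝ (Fin n))) (r/4)) :=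
        Measure.addHaar_closedBall_center volume _ _
      have h1 : c0 * Real.exp (r/4 * ‖ξ‖) = ∫ _ in B, Real.exp (r/4 * ‖ξ‖) := by
        rw [setIntegral_const, measureReal_def, hvolB, hc0def, smul_eq_mul]
      have h2 : (∫ _ in B, Real.exp (r/4 * ‖ξ‖)) ≤ ∫ u in B, Real.exp ⟪ξ, u⟫ := by
        apply setIntegral_mono_on
          (integrableOn_const measure_closedBall_lt_top.ne)
          ((hInt ξ).mono_set hBΔ) measurableSet_closedBall
        intro u hu
        apply Real.exp_le_exp.2
        have := (hcap u hu).1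
        nlinarith [this]
      have h3 : (∫ u in B, Real.exp ⟪ξ, u⟫) ≤ ∫ u in Δ, Real.exp ⟪ξ, u⟫ := by
        apply setIntegral_mono_set (hInt ξ)
          (Filter.Eventually.of_forall fun u => (Real.exp_pos _).le)
          (HasSubset.Subset.eventuallyLE hBΔ)
      calc c0 * Real.exp (r/4 * ‖ξ‖) = _ := h1
        _ ≤ _ := h2
        _ ≤ F ξ := h3
  -- choose radius R capturing a global minimum
  set R : ℝ := max 1 ((4/r) * Real.log ((F 0 + 1)/c0)) with hRdef
  have hR0 : (0:ℝ) < R := lt_of_lt_of_le one_pos (le_max_left _ _)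
  have hFR : ∀ ξ : (EuclideanSpace ℝ (Fin n)), R < ‖ξ‖ → F 0 < F ξ := by
    intro ξ hξ
    have hF0pos : 0 < F 0 + 1 := by
      have := (hcoer 0)
      simp only [norm_zero, mul_zero, Real.exp_zero, mul_one] at this
      nlinarith [hc0pos]
    have hlog : (r/4) * R ≥ Real.log ((F 0 + 1)/c0) := by
      have h1 : R ≥ (4/r) * Real.log ((F 0 + 1)/c0) := le_max_right _ _
      have h2 : (r/4) * ((4/r) * Real.log ((F 0 + 1)/c0)) = Real.log ((F 0 + 1)/c0) := by
        field_simp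
      nlinarith [hr0]
    have hexp : (F 0 + 1)/c0 ≤ Real.exp ((r/4) * R) := by
      calc (F 0 + 1)/c0 = Real.exp (Real.log ((F 0 + 1)/c0)) :=
            (Real.exp_log (by positivity)).symm
        _ ≤ Real.exp ((r/4) * R) := Real.exp_le_exp.2 hlog
    have h4 : F 0 + 1 ≤ c0 * Real.exp ((r/4) * R) := by
      rw [div_le_iff₀ hc0pos] at hexp
      linarith [mul_comm c0 (Real.exp ((r/4) * R)), hexp]
    have h5 : c0 * Real.exp ((r/4) * R) < c0 * Real.exp ((r/4) * ‖ξ‖) := by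
      apply mul_lt_mul_of_pos_left _ hc0pos
      apply Real.exp_lt_exp.2
      nlinarith [hr0]
    have := hcoer ξ
    nlinarith
  -- get a global minimizer
  obtain ⟨ξ₀, hξ₀mem, hmin⟩ :=
    (isCompact_closedBall (0 : (EuclideanSpace ℝ (Fin n))) R).exists_isMinOn
      ⟨0, Metric.mem_closedBall_self hR0.le⟩ hFcont.continuousOn
  have hglobal : ∀ ξ : (EuclideanSpace ℝ (Fin n)), F ξ₀ ≤ F ξ := by
    intro ξ
    by_cases hξ : ξ ∈ Metric.closedBall (0 : (EuclideanSpace ℝ (Fin n))) R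
    · exact isMinOn_iff.1 hmin ξ hξ
    · have : R < ‖ξ‖ := by
        rw [Metric.mem_closedBall, dist_zero_right, not_le] at hξ
        exact hξ
      have h1 := hFR ξ this
      have h2 := isMinOn_iff.1 hmin 0 (Metric.mem_closedBall_self hR0.le)
      linarith
  have hlocal : IsLocalMin F ξ₀ := Filter.Eventually.of_forall hglobal
  have hderiv0 : (∫ u in Δ, Real.exp ⟪ξ₀, u⟫ • (innerSL ℝ u : (EuclideanSpace ℝ (Fin n)) →L[ℝ] ℝ)) = 0 :=
    hlocal.hasFDerivAt_eq_zero (hF' ξ₀)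
  -- candidate satisfies the equation
  have hsol : (∫ u in Δ, Real.exp ⟪ξ₀, u⟫ • u) = 0 := by
    apply integral_eq_zero_of_forall_integral_inner_eq_zero ℝ _ (hIntV ξ₀)
    intro c
    have h1 := ContinuousLinearMap.integral_apply (hIntL ξ₀) c
    rw [hderiv0] at h1
    simp only [ContinuousLinearMap.zero_apply, ContinuousLinearMap.smul_apply,
      innerSL_apply_apply] at h1
    simp only [smul_eq_mul] at h1
    have h2 : (∫ u in Δ, ⟪c, Real.exp ⟪ξ₀, u⟫ • u⟫)
        = ∫ u in Δ, Real.exp ⟪ξ₀, u⟫ * ⟪u, c⟫ := by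
      congr 1
      funext u
      rw [real_inner_smul_right, real_inner_comm c u]
    rw [h2]
    exact h1.symm
  -- uniqueness
  have huniq : ∀ ξ₁ ξ₂ : (EuclideanSpace ℝ (Fin n)), (∫ u in Δ, Real.exp ⟪ξ₁, u⟫ • u) = 0 →
      (∫ u in Δ, Real.exp ⟪ξ₂, u⟫ • u) = 0 → ξ₁ = ξ₂ := by
    intro ξ₁ ξ₂ h1 h2
    by_contra hne
    set w : (EuclideanSpace ℝ (Fin n)) := ξ₂ - ξ₁ with hwdef
    have hw : w ≠ 0 := sub_ne_zero.2 (Ne.symm hne)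
    set g : (EuclideanSpace ℝ (Fin n)) → ℝ := fun u => (Real.exp ⟪ξ₂, u⟫ - Real.exp ⟪ξ₁, u⟫) * ⟪w, u⟫ with hgdef
    have hgcont : Continuous g :=
      (((cont_exp ξ₂).sub (cont_exp ξ₁)).mul (continuous_const.inner continuous_id))
    have hgint : IntegrableOn g Δ := hgcont.continuousOn.integrableOn_compact hc
    have hgnonneg : ∀ u : (EuclideanSpace ℝ (Fin n)), 0 ≤ g u := by
      intro u
      have hsub : ⟪w, u⟫ = ⟪ξ₂, u⟫ - ⟪ξ₁, u⟫ := by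
        rw [hwdef, inner_sub_left]
      simp only [hgdef]
      rw [hsub]
      rcases le_total ⟪ξ₁, u⟫ ⟪ξ₂, u⟫ with h | h
      · have hee := Real.exp_le_exp.2 h
        nlinarith
      · have hee := Real.exp_le_exp.2 h
        nlinarith
    -- integral of g over Δ is zero
    have hgzero : (∫ u in Δ, g u) = 0 := by
      have hf : IntegrableOn (fun u => Real.exp ⟪ξ₂, u⟫ • u - Real.exp ⟪ξ₁, u⟫ • u) Δ :=
        (hIntV ξ₂).sub (hIntV ξ₁)
      have key : (∫ u in Δ, g u)
          = ⟪w, ∫ u in Δ, (Real.exp ⟪ξ₂, u⟫ • u - Real.exp ⟪ξ₁, u⟫ • u)⟫ := by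
        rw [← integral_inner hf w]
        congr 1
        funext u
        rw [hgdef, inner_sub_right, real_inner_smul_right, real_inner_smul_right]
        ring
      rw [key, integral_sub (hIntV ξ₂) (hIntV ξ₁), h1, h2, sub_zero, inner_zero_right]
    -- but integral is positive
    set B := Metric.closedBall ((r/2) • (‖w‖⁻¹ • w)) (r/4) with hBdef
    have hcap := cap_lemma w hw hr0
    have hBΔ : B ⊆ Δ := fun u hu => hrΔ (Metric.mem_ball.2 (by
      rw [dist_zero_right]; exact (hcap u hu).2))
    have hgposB : ∀ u ∈ B, 0 < g u := by
      intro u hu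
      have hwpos : 0 < ‖w‖ := norm_pos_iff.2 hw
      have hlow : ‖w‖ * (r/4) ≤ ⟪w, u⟫ := (hcap u hu).1
      have hinpos : 0 < ⟪w, u⟫ := lt_of_lt_of_le (by positivity) hlow
      have hsub : ⟪w, u⟫ = ⟪ξ₂, u⟫ - ⟪ξ₁, u⟫ := by rw [hwdef, inner_sub_left]
      have hlt : ⟪ξ₁, u⟫ < ⟪ξ₂, u⟫ := by linarith [hsub ▸ hinpos]
      have : 0 < Real.exp ⟪ξ₂, u⟫ - Real.exp ⟪ξ₁, u⟫ := by
        have := Real.exp_lt_exp.2 hlt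
        linarith
      exact mul_pos this hinpos
    have hposB : 0 < ∫ u in B, g u := by
      rw [setIntegral_pos_iff_support_of_nonneg_ae
        (Filter.Eventually.of_forall hgnonneg) (hgint.mono_set hBΔ)]
      have hBsub : B ⊆ Function.support g ∩ B := fun u hu =>
        ⟨fun h => (hgposB u hu).ne' h, hu⟩
      refine lt_of_lt_of_le ?_ (measure_mono hBsub)
      exact Metric.measure_closedBall_pos volume _ (by linarith)
    have hle : (∫ u in B, g u) ≤ ∫ u in Δ, g u :=
      setIntegral_mono_set hgint (Filter.Eventually.of_forall hgnonneg)
        (HasSubset.Subset.eventuallyLE hBΔ)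
    linarith [hgzero ▸ (lt_of_lt_of_le hposB hle)]
  exact ⟨ξ₀, hsol, fun y hy => huniq y ξ₀ hy hsol⟩
end

section
/- Let Δ ⊂ ℝⁿ be a compact convex set with 0 in its interior, let ξ ∈ ℝⁿ be the unique vector with ∫_Δ u e^{⟨ξ,u⟩} du = 0, and let σ : ℝⁿ → ℝⁿ be an invertible linear map with σ(Δ) = Δ. Then σᵀξ = ξ, where σᵀ denotes the transpose of σ. -/
open MeasureTheory
open scoped RealInnerProductSpace

theorem stmt9 (n : ℕ) (Δ : Set (EuclideanSpace ℝ (Fin n))) (hc : IsCompact Δ)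
    (hconv : Convex ℝ Δ) (h0 : (0 : EuclideanSpace ℝ (Fin n)) ∈ interior Δ)
    (ξ : EuclideanSpace ℝ (Fin n))
    (hξ : (∫ u in Δ, Real.exp ⟪ξ, u⟫ • u) = 0)
    (huniq : ∀ η : EuclideanSpace ℝ (Fin n),
      (∫ u in Δ, Real.exp ⟪η, u⟫ • u) = 0 → η = ξ)
    (σ : EuclideanSpace ℝ (Fin n) →ₗ[ℝ] EuclideanSpace ℝ (Fin n))
    (hσ : Function.Bijective σ) (hσΔ : σ '' Δ = Δ) :
    LinearMap.adjoint σ ξ = ξ := by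
  classical
  set η := LinearMap.adjoint σ ξ with hη
  set τ : EuclideanSpace ℝ (Fin n) →L[ℝ] EuclideanSpace ℝ (Fin n) :=
    LinearMap.toContinuousLinearMap σ with hτ
  have hτσ : ∀ x, τ x = σ x := fun x => rfl
  have hdet : LinearMap.det σ ≠ 0 := by
    have := (LinearEquiv.ofBijective σ hσ).isUnit_det'
    have h' : ((LinearEquiv.ofBijective σ hσ : EuclideanSpace ℝ (Fin n) ≃ₗ[ℝ] EuclideanSpace ℝ (Fin n)) :
        EuclideanSpace ℝ (Fin n) →ₗ[ℝ] EuclideanSpace ℝ (Fin n)) = σ := LinearMap.ext fun x => rfl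
    simpa [h'] using this.ne_zero
  have hderiv : ∀ x ∈ Δ, HasFDerivWithinAt (fun x => σ x) τ Δ x := fun x _ =>
    (τ.hasFDerivAt).hasFDerivWithinAt
  have hτdet : τ.det = LinearMap.det σ := by
    simp [ContinuousLinearMap.det, hτ]
  have hcont : Continuous fun x : EuclideanSpace ℝ (Fin n) => Real.exp ⟪η, x⟫ • x := by
    exact ((Real.continuous_exp.comp (continuous_const.inner continuous_id)).smul continuous_id)
  have hint : IntegrableOn (fun x : EuclideanSpace ℝ (Fin n) => Real.exp ⟪η, x⟫ • x) Δ := by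
    exact hcont.continuousOn.integrableOn_compact hc
  have key : (∫ u in Δ, Real.exp ⟪ξ, u⟫ • u)
      = |LinearMap.det σ| • σ (∫ x in Δ, Real.exp ⟪η, x⟫ • x) := by
    conv_lhs => rw [← hσΔ]
    rw [integral_image_eq_integral_abs_det_fderiv_smul volume hc.measurableSet hderiv
      hσ.injective.injOn (fun u => Real.exp ⟪ξ, u⟫ • u)]
    have heq : ∀ x, |τ.det| • (Real.exp ⟪ξ, σ x⟫ • σ x)
        = |LinearMap.det σ| • (τ (Real.exp ⟪η, x⟫ • x)) := by
      intro x
      rw [hτdet, _root_.map_smul, hτσ, hη, LinearMap.adjoint_inner_left]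
    simp only [heq]
    rw [integral_smul, τ.integral_comp_comm hint]
    rfl
  rw [hξ] at key
  have h1 : σ (∫ x in Δ, Real.exp ⟪η, x⟫ • x) = 0 := by
    rcases smul_eq_zero.mp key.symm with h | h
    · exact absurd h (abs_ne_zero.mpr hdet)
    · exact h
  have h2 : (∫ x in Δ, Real.exp ⟪η, x⟫ • x) = 0 := by
    apply hσ.injective
    simpa using h1
  exact huniq η h2
end

section
/- Let Δ₀ ⊂ ℝ³ be the polytope conv((−3,0,1),(−2,1,1),(2,1,−1),(3,0,−2),(0,−3,1),(0,1,1)). For every real ξ ≠ 0, ∫_{Δ₀} u₂ · e^{ξ u₂} du = (1/ξ⁴) · ((2ξ³ − 3ξ − 3)e^{4ξ} + 12ξ e^{3ξ} + 3ξ + 3) · e^{−3ξ}, where u = (u₁,u₂,u₃) and integration is with respect to Lebesgue measure on ℝ³. -/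
open MeasureTheory Set

noncomputable section StmtAux

def myH : Set (Fin 3 → ℝ) :=
  {u | u 1 ≤ 1 ∧ u 2 ≤ 1 ∧ u 0 + u 2 ≤ 1 ∧
    -1 - u 1 ≤ u 0 + 2 * u 2 ∧ u 1 - 1 ≤ u 0 + 2 * u 2}

def myV : Fin 6 → (Fin 3 → ℝ) :=
  ![![(-3:ℝ),0,1], ![-2,1,1], ![2,1,-1], ![3,0,-2], ![0,-3,1], ![0,1,1]]

@[simp] lemma cons_val_five {α : Type*} (a b c d e f : α) : (![a,b,c,d,e,f]) 5 = f := rfl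
lemma mem_hull_of_weights (u : Fin 3 → ℝ) (w : Fin 6 → ℝ) (hw : ∀ i, 0 ≤ w i)
    (hsum : ∑ i, w i = 1) (hcomb : ∑ i, w i • myV i = u) :
    u ∈ convexHull ℝ
      ({![(-3:ℝ),0,1], ![-2,1,1], ![2,1,-1], ![3,0,-2], ![0,-3,1], ![0,1,1]} :
        Set (Fin 3 → ℝ)) := by
  have hz : ∀ i ∈ (Finset.univ : Finset (Fin 6)), myV i ∈
      ({![(-3:ℝ),0,1], ![-2,1,1], ![2,1,-1], ![3,0,-2], ![0,-3,1], ![0,1,1]} :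
        Set (Fin 3 → ℝ)) := by
    intro i _
    fin_cases i <;> simp [myV]
  have h := Finset.centerMass_mem_convexHull (Finset.univ : Finset (Fin 6))
    (w := w) (fun i _ => hw i) (by rw [hsum]; norm_num) hz
  rwa [Finset.centerMass, hsum, inv_one, one_smul, hcomb] at h

lemma H_sub_hull : myH ⊆ convexHull ℝ
      ({![(-3:ℝ),0,1], ![-2,1,1], ![2,1,-1], ![3,0,-2], ![0,-3,1], ![0,1,1]} :
        Set (Fin 3 → ℝ)) := by
  rintro u ⟨h1,h2,h3,h4,h5⟩
  set x := u 0 with hx; set y := u 1 with hy; set z := u 2 with hz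
  rcases le_or_gt 1 (2*x + y + 4*z) with hc | hc
  · refine mem_hull_of_weights u
      ![0, (1-x-z)/2, (1-z)/2, 0, (1-y)/4, (2*x+y+4*z-1)/4]
      (by intro i; fin_cases i <;> simp <;> linarith) ?_ ?_
    · simp [Fin.sum_univ_six]; ring
    · simp only [myV, Fin.sum_univ_six, Matrix.smul_cons, smul_eq_mul, Matrix.smul_empty,
        Matrix.cons_add_cons, Matrix.empty_add_empty]
      funext j
      fin_cases j <;> simp <;> linarith
  · rcases le_or_gt 0 (x + y + 3*z) with hd | hd
    · refine mem_hull_of_weights u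
        ![(1-2*x-y-4*z)/3, (x+y+3*z)/2, (1-z)/2, 0, (x-y+2*z+1)/6, 0]
        (by intro i; fin_cases i <;> simp <;> linarith) ?_ ?_
      · simp [Fin.sum_univ_six]; ring
      · simp only [myV, Fin.sum_univ_six, Matrix.smul_cons, smul_eq_mul, Matrix.smul_empty,
          Matrix.cons_add_cons, Matrix.empty_add_empty]
        funext j
        fin_cases j <;> simp <;> linarith
    · refine mem_hull_of_weights u
        ![(1-x-z)/3, 0, (x+y+2*z+1)/2, -(x+y+3*z)/3, (x-y+2*z+1)/6, 0]
        (by intro i; fin_cases i <;> simp <;> linarith) ?_ ?_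
      · simp [Fin.sum_univ_six]; ring
      · simp only [myV, Fin.sum_univ_six, Matrix.smul_cons, smul_eq_mul, Matrix.smul_empty,
          Matrix.cons_add_cons, Matrix.empty_add_empty]
        funext j
        fin_cases j <;> simp <;> linarith

lemma hull_sub :
    convexHull ℝ
      ({![(-3:ℝ),0,1], ![-2,1,1], ![2,1,-1], ![3,0,-2], ![0,-3,1], ![0,1,1]} :
        Set (Fin 3 → ℝ)) ⊆ myH := by
  apply convexHull_min
  · intro u hu
    simp only [Set.mem_insert_iff, Set.mem_singleton_iff] at hu
    rcases hu with h|h|h|h|h|h <;> subst h <;>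
      simp [myH] <;> norm_num
  · rintro u ⟨h1,h2,h3,h4,h5⟩ v ⟨g1,g2,g3,g4,g5⟩ a b ha hb hab
    simp only [myH, mem_setOf_eq, Pi.add_apply, Pi.smul_apply, smul_eq_mul]
    refine ⟨?_,?_,?_,?_,?_⟩ <;> nlinarith

lemma hull_eq :
    convexHull ℝ
      ({![(-3:ℝ),0,1], ![-2,1,1], ![2,1,-1], ![3,0,-2], ![0,-3,1], ![0,1,1]} :
        Set (Fin 3 → ℝ)) = myH :=
  subset_antisymm hull_sub H_sub_hull

def myD : Set (ℝ × ℝ × ℝ) :=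
  {p | p.1 ≤ 1 ∧ p.2.2 ≤ 1 ∧ p.2.1 + p.2.2 ≤ 1 ∧
    -1 - p.1 ≤ p.2.1 + 2 * p.2.2 ∧ p.1 - 1 ≤ p.2.1 + 2 * p.2.2}

def myE : (Fin 3 → ℝ) ≃ᵐ ℝ × (ℝ × ℝ) :=
  (MeasurableEquiv.piFinSuccAbove (fun _ : Fin 3 => ℝ) 1).trans
    ((MeasurableEquiv.refl ℝ).prodCongr (MeasurableEquiv.finTwoArrow))
lemma myE_mp : MeasurePreserving myE volume volume := by
  have h1 := MeasureTheory.volume_preserving_piFinSuccAbove (fun _ : Fin 3 => ℝ) 1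
  have h2 : MeasurePreserving
      ((MeasurableEquiv.refl ℝ).prodCongr (MeasurableEquiv.finTwoArrow (α := ℝ)))
      volume volume := by
    rw [Measure.volume_eq_prod, Measure.volume_eq_prod]
    exact (MeasurePreserving.id volume).prod (volume_preserving_finTwoArrow ℝ)
  exact h2.comp h1

lemma myD_meas : MeasurableSet myD := by
  have : myD = {p : ℝ × ℝ × ℝ | p.1 ≤ 1} ∩ ({p | p.2.2 ≤ 1} ∩ ({p | p.2.1 + p.2.2 ≤ 1} ∩
      ({p | -1 - p.1 ≤ p.2.1 + 2 * p.2.2} ∩ {p | p.1 - 1 ≤ p.2.1 + 2 * p.2.2}))) := rfl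
  rw [this]
  refine (measurableSet_le measurable_fst measurable_const).inter
    ((measurableSet_le measurable_snd.snd measurable_const).inter
    ((measurableSet_le (measurable_snd.fst.add measurable_snd.snd) measurable_const).inter
    ((measurableSet_le (measurable_const.sub measurable_fst)
        (measurable_snd.fst.add (measurable_snd.snd.const_mul 2))).inter
    (measurableSet_le (measurable_fst.sub measurable_const)
        (measurable_snd.fst.add (measurable_snd.snd.const_mul 2))))))

lemma myH_meas : MeasurableSet myH := by
  have : myH = myE ⁻¹' myD := rfl
  rw [this]
  exact myE.measurable myD_meas

variable (ξ : ℝ)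

def myW (y z : ℝ) : ℝ :=
  if y ≤ 1 ∧ z ≤ 1 then (y * Real.exp (ξ * y)) * max (1 - max (-1-y) (y-1) + z) 0 else 0

def myΦ (y : ℝ) : ℝ :=
  (Iic (1:ℝ)).indicator (fun y => y * Real.exp (ξ * y) * (max (2 - max (-1-y) (y-1)) 0)^2 / 2) y

def myg : ℝ × ℝ × ℝ → ℝ := myD.indicator (fun p => p.1 * Real.exp (ξ * p.1))

lemma inner_int (y z : ℝ) : ∫ x, myg ξ (y, (x, z)) = myW ξ y z := by
  by_cases h : y ≤ 1 ∧ z ≤ 1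
  · have hfun : (fun x => myg ξ (y, (x, z)))
        = (Icc (max (-1-y) (y-1) - 2*z) (1-z)).indicator (fun _ => y * Real.exp (ξ * y)) := by
      funext x
      by_cases hB : x ∈ Icc (max (-1-y) (y-1) - 2*z) (1-z)
      · rw [Set.indicator_of_mem hB]
        have hD : (y, (x, z)) ∈ myD := by
          have h1 := le_trans (le_max_left (-1-y) (y-1)) (by linarith [hB.1] : max (-1-y) (y-1) ≤ x + 2*z)
          have h2 := le_trans (le_max_right (-1-y) (y-1)) (by linarith [hB.1] : max (-1-y) (y-1) ≤ x + 2*z)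
          exact ⟨h.1, h.2, by linarith [hB.2], h1, h2⟩
        rw [myg, Set.indicator_of_mem hD]
      · rw [Set.indicator_of_notMem hB]
        have hD : (y, (x, z)) ∉ myD := by
          rintro ⟨_, _, h3, h4, h5⟩
          dsimp only at h3 h4 h5
          have hmax : max (-1-y) (y-1) - 2*z ≤ x := by
            have := max_le (show -1-y ≤ x + 2*z by linarith) (show y-1 ≤ x + 2*z by linarith)
            linarith
          exact hB ⟨hmax, by linarith⟩
        rw [myg, Set.indicator_of_notMem hD]
    rw [hfun, integral_indicator_const _ measurableSet_Icc, Real.volume_real_Icc, smul_eq_mul,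
      myW, if_pos h,
      show (1 : ℝ) - z - (max (-1-y) (y-1) - 2*z) = 1 - max (-1-y) (y-1) + z by ring, mul_comm]
  · have hfun : (fun x => myg ξ (y, (x, z))) = fun _ => (0:ℝ) := by
      funext x
      have hD : (y, (x, z)) ∉ myD := by
        rintro ⟨h1, h2, -⟩
        exact h ⟨h1, h2⟩
      rw [myg, Set.indicator_of_notMem hD]
    rw [hfun, myW, if_neg h, integral_zero]


lemma middle_int (y : ℝ) : ∫ z, myW ξ y z = myΦ ξ y := by
  by_cases hy : y ≤ 1
  · set M := max (-1-y) (y-1) with hM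
    set c := y * Real.exp (ξ * y) with hc
    have hfun : (fun z => myW ξ y z)
        = fun z => (Iic (1:ℝ)).indicator (fun z => c * max ((1 - M) + z) 0) z := by
      funext z
      by_cases hz : z ≤ 1
      · rw [Set.indicator_of_mem (mem_Iic.2 hz), myW, if_pos ⟨hy, hz⟩]
      · rw [Set.indicator_of_notMem (by simpa using hz), myW,
          if_neg (by rintro ⟨-, h⟩; exact hz h)]
    rw [hfun, integral_indicator measurableSet_Iic]
    have hfun2 : (fun z => c * max ((1 - M) + z) 0)
        = fun z => c * (Ici (M - 1)).indicator (fun z => (1 - M) + z) z := by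
      funext z
      by_cases hz : M - 1 ≤ z
      · rw [Set.indicator_of_mem (mem_Ici.2 hz), max_eq_left (by linarith)]
      · rw [Set.indicator_of_notMem (by simpa using hz), max_eq_right (by linarith)]
    rw [hfun2, integral_const_mul, setIntegral_indicator measurableSet_Ici,
      show Iic (1:ℝ) ∩ Ici (M - 1) = Icc (M-1) 1 by ext t; simp [mem_Icc, and_comm]]
    have hΦ : myΦ ξ y = c * ((max (2 - M) 0)^2 / 2) := by
      rw [myΦ, Set.indicator_of_mem (mem_Iic.2 hy)]; ring
    by_cases hM2 : M - 1 ≤ 1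
    · rw [integral_Icc_eq_integral_Ioc, ← intervalIntegral.integral_of_le hM2]
      rw [intervalIntegral.integral_add (intervalIntegrable_const) intervalIntegral.intervalIntegrable_id,
        intervalIntegral.integral_const, integral_id, hΦ, max_eq_left (by linarith), smul_eq_mul]
      ring
    · rw [Icc_eq_empty (by linarith), setIntegral_empty, hΦ,
        max_eq_right (by linarith)]
      norm_num
  · have hfun : (fun z => myW ξ y z) = fun _ => (0:ℝ) := by
      funext z
      rw [myW, if_neg (by rintro ⟨h, -⟩; exact hy h)]
    rw [hfun, integral_zero, myΦ, Set.indicator_of_notMem (by simpa using hy)]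

lemma hasDeriv_aux (A B C D t : ℝ) :
    HasDerivAt (fun t => Real.exp (ξ*t) * (A*t^3 + B*t^2 + C*t + D))
      (Real.exp (ξ*t) * (ξ*(A*t^3 + B*t^2 + C*t + D) + (3*A*t^2 + 2*B*t + C))) t := by
  have h1 : HasDerivAt (fun t => Real.exp (ξ*t)) (ξ * Real.exp (ξ*t)) t := by
    simpa [mul_comm] using (HasDerivAt.exp ((hasDerivAt_id t).const_mul ξ))
  have h2 : HasDerivAt (fun t => A*t^3 + B*t^2 + C*t + D) (3*A*t^2 + 2*B*t + C) t := by
    have := ((((hasDerivAt_pow 3 t).const_mul A).add ((hasDerivAt_pow 2 t).const_mul B)).add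
      ((hasDerivAt_id t).const_mul C)).add_const D
    exact this.congr_deriv (by rw [show (3:ℕ)-1 = 2 from rfl, show (2:ℕ)-1 = 1 from rfl]; push_cast; ring)
  exact (h1.mul h2).congr_deriv (by ring)

set_option maxHeartbeats 2000000 in
lemma outer_int (hξ : ξ ≠ 0) : ∫ y, myΦ ξ y =
    (1/ξ^4) * ((2*ξ^3 - 3*ξ - 3)*Real.exp (4*ξ) + 12*ξ*Real.exp (3*ξ) + 3*ξ + 3)
      * Real.exp (-3*ξ) := by
  have hfun : (fun y => y * Real.exp (ξ * y) * (max (2 - max (-1-y) (y-1)) 0)^2 / 2)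
      = fun y => (Icc (-3:ℝ) 3).indicator
          (fun y => y * Real.exp (ξ * y) * (2 - max (-1-y) (y-1))^2 / 2) y := by
    funext y
    by_cases hy3 : y ∈ Icc (-3:ℝ) 3
    · rw [Set.indicator_of_mem hy3,
        max_eq_left (by rcases hy3 with ⟨h1,h2⟩; have := max_le (show -1-y ≤ 2 by linarith) (show y-1 ≤ 2 by linarith); linarith)]
    · rw [Set.indicator_of_notMem hy3]
      have h2M : 2 - max (-1-y) (y-1) ≤ 0 := by
        rcases lt_or_ge y (-3) with h|h
        · linarith [le_max_left (-1-y) (y-1)]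
        · have h2 : 3 < y := by
            by_contra hcon
            exact hy3 ⟨h, by linarith⟩
          linarith [le_max_right (-1-y) (y-1)]
      rw [max_eq_right h2M]
      norm_num
  rw [show (∫ y, myΦ ξ y) = ∫ y in Iic (1:ℝ),
      y * Real.exp (ξ * y) * (max (2 - max (-1-y) (y-1)) 0)^2 / 2
    from integral_indicator measurableSet_Iic]
  have hinter : Iic (1:ℝ) ∩ Icc (-3) 3 = Icc (-3) 1 := by
    ext t
    simp only [mem_inter_iff, mem_Iic, mem_Icc]
    constructor
    · rintro ⟨h1, h2, h3⟩; exact ⟨h2, h1⟩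
    · rintro ⟨h1, h2⟩; exact ⟨h2, h1, by linarith⟩
  rw [hfun, setIntegral_indicator measurableSet_Icc, hinter,
    integral_Icc_eq_integral_Ioc, ← intervalIntegral.integral_of_le (by norm_num : (-3:ℝ) ≤ 1)]
  have hGc : Continuous (fun y : ℝ => y * Real.exp (ξ * y) * (2 - max (-1-y) (y-1))^2 / 2) :=
    ((continuous_id.mul ((continuous_const.mul continuous_id).rexp)).mul
      ((continuous_const.sub ((continuous_const.sub continuous_id).max
        (continuous_id.sub continuous_const))).pow 2)).div_const 2
  rw [← intervalIntegral.integral_add_adjacent_intervals (a := (-3:ℝ)) (b := 0) (c := 1)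
    (hGc.intervalIntegrable _ _) (hGc.intervalIntegrable _ _)]
  have hcong1 : ∫ y in (-3:ℝ)..0, y * Real.exp (ξ * y) * (2 - max (-1-y) (y-1))^2 / 2
      = ∫ y in (-3:ℝ)..0, y * Real.exp (ξ * y) * (3+y)^2 / 2 := by
    apply intervalIntegral.integral_congr
    intro t ht
    rw [uIcc_of_le (by norm_num : (-3:ℝ) ≤ 0)] at ht
    dsimp only
    rw [max_eq_left (by linarith [ht.2] : t - 1 ≤ -1 - t)]
    ring_nf
  have hcong2 : ∫ y in (0:ℝ)..1, y * Real.exp (ξ * y) * (2 - max (-1-y) (y-1))^2 / 2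
      = ∫ y in (0:ℝ)..1, y * Real.exp (ξ * y) * (3-y)^2 / 2 := by
    apply intervalIntegral.integral_congr
    intro t ht
    rw [uIcc_of_le (by norm_num : (0:ℝ) ≤ 1)] at ht
    dsimp only
    rw [max_eq_right (by linarith [ht.1] : -1 - t ≤ t - 1)]
    ring_nf
  set A := 1/(2*ξ) with hA
  set B1 := 3/ξ - 3/(2*ξ^2) with hB1
  set C1 := 9/(2*ξ) - 6/ξ^2 + 3/ξ^3 with hC1
  set D1 := -9/(2*ξ^2) + 6/ξ^3 - 3/ξ^4 with hD1
  set B2 := -3/ξ - 3/(2*ξ^2) with hB2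
  set C2 := 9/(2*ξ) + 6/ξ^2 + 3/ξ^3 with hC2
  set D2 := -9/(2*ξ^2) - 6/ξ^3 - 3/ξ^4 with hD2
  have hc1 : Continuous (fun y : ℝ => y * Real.exp (ξ * y) * (3+y)^2 / 2) :=
    ((continuous_id.mul ((continuous_const.mul continuous_id).rexp)).mul
      ((continuous_const.add continuous_id).pow 2)).div_const 2
  have hc2 : Continuous (fun y : ℝ => y * Real.exp (ξ * y) * (3-y)^2 / 2) :=
    ((continuous_id.mul ((continuous_const.mul continuous_id).rexp)).mul
      ((continuous_const.sub continuous_id).pow 2)).div_const 2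
  have hderiv1 : ∀ t ∈ uIcc (-3:ℝ) 0,
      HasDerivAt (fun t => Real.exp (ξ*t) * (A*t^3+B1*t^2+C1*t+D1))
        (t * Real.exp (ξ * t) * (3+t)^2 / 2) t := by
    intro t ht
    have h := hasDeriv_aux ξ A B1 C1 D1 t
    convert h using 1
    rw [hA, hB1, hC1, hD1]
    field_simp
    ring
  have hint1 := intervalIntegral.integral_eq_sub_of_hasDerivAt hderiv1
    (hc1.intervalIntegrable (-3) 0)
  have hderiv2 : ∀ t ∈ uIcc (0:ℝ) 1,
      HasDerivAt (fun t => Real.exp (ξ*t) * (A*t^3+B2*t^2+C2*t+D2))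
        (t * Real.exp (ξ * t) * (3-t)^2 / 2) t := by
    intro t ht
    have h := hasDeriv_aux ξ A B2 C2 D2 t
    convert h using 1
    rw [hA, hB2, hC2, hD2]
    field_simp
    ring
  have hint2 := intervalIntegral.integral_eq_sub_of_hasDerivAt hderiv2
    (hc2.intervalIntegrable 0 1)
  rw [hcong1, hcong2, hint1, hint2]
  rw [show ξ * (0:ℝ) = 0 by ring, show ξ * (-3:ℝ) = -(3*ξ) by ring,
    show ξ * (1:ℝ) = ξ by ring, Real.exp_zero, Real.exp_neg,
    show (-3:ℝ)*ξ = -(3*ξ) by ring, Real.exp_neg,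
    show (4:ℝ)*ξ = ξ + 3*ξ by ring, Real.exp_add]
  rw [hA, hB1, hC1, hD1, hB2, hC2, hD2]
  have hexp := Real.exp_ne_zero (3*ξ)
  field_simp
  ring

end StmtAux

theorem stmt12 (ξ : ℝ) (hξ : ξ ≠ 0) :
    (∫ u in convexHull ℝ
        ({![(-3:ℝ),0,1], ![-2,1,1], ![2,1,-1], ![3,0,-2], ![0,-3,1], ![0,1,1]} :
          Set (Fin 3 → ℝ)),
        u 1 * Real.exp (ξ * u 1)) =
      (1/ξ^4) * ((2*ξ^3 - 3*ξ - 3)*Real.exp (4*ξ) + 12*ξ*Real.exp (3*ξ) + 3*ξ + 3)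
        * Real.exp (-3*ξ) := by
  have hcpt : IsCompact myH := by
    rw [← hull_eq]
    exact (Set.toFinite _).isCompact_convexHull ℝ
  have hcont : Continuous (fun u : Fin 3 → ℝ => u 1 * Real.exp (ξ * u 1)) :=
    (continuous_apply 1).mul ((continuous_const.mul (continuous_apply 1)).rexp)
  have hInt : IntegrableOn (fun u : Fin 3 → ℝ => u 1 * Real.exp (ξ * u 1)) myH :=
    hcont.continuousOn.integrableOn_compact hcpt
  have hIndInt : Integrable (myH.indicator (fun u : Fin 3 → ℝ => u 1 * Real.exp (ξ * u 1))) :=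
    (integrable_indicator_iff myH_meas).2 hInt
  have hcompeq : myH.indicator (fun u : Fin 3 → ℝ => u 1 * Real.exp (ξ * u 1))
      = (myg ξ) ∘ myE := rfl
  have hgInt : Integrable (myg ξ) (volume : Measure (ℝ × ℝ × ℝ)) := by
    rw [← myE_mp.integrable_comp_emb (MeasurableEquiv.measurableEmbedding _), ← hcompeq]
    exact hIndInt
  rw [hull_eq, ← integral_indicator myH_meas, hcompeq]
  simp only [Function.comp_apply]
  rw [myE_mp.integral_comp (MeasurableEquiv.measurableEmbedding _)]
  rw [show (volume : Measure (ℝ × ℝ × ℝ)) = volume.prod volume from rfl] at hgInt ⊢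
  rw [integral_prod _ hgInt]
  rw [← outer_int ξ hξ]
  refine integral_congr_ae ?_
  filter_upwards [hgInt.prod_right_ae] with y hy
  have : ∫ q : ℝ × ℝ, myg ξ (y, q) = ∫ z, ∫ x, myg ξ (y, (x, z)) := by
    rw [show (volume : Measure (ℝ × ℝ)) = volume.prod volume from rfl] at hy ⊢
    exact integral_prod_symm _ hy
  rw [this]
  simp only [inner_int ξ]
  exact middle_int ξ y
end

section
/- Let B ⊂ ℝ² be the pentagon conv((−3,0),(−2,1),(2,1),(3,0),(0,−3)). Then ∫_B ( 2 + min(0,−x) + min(0,y) + (x − y − 1)/2 ) dx dy = 23/3. -/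
open MeasureTheory Set

noncomputable section

private def lo16 (x : ℝ) : ℝ := max (x-3) (-x-3)
private def hi16 (x : ℝ) : ℝ := min 1 (min (3-x) (3+x))
private def S16 : Set (ℝ × ℝ) :=
  {p | p.1-3 ≤ p.2 ∧ -p.1-3 ≤ p.2 ∧ p.2 ≤ 1 ∧ p.2 ≤ 3-p.1 ∧ p.2 ≤ 3+p.1}
private def f16 (p : ℝ × ℝ) : ℝ := 2 + min 0 (-p.1) + min 0 p.2 + (p.1 - p.2 - 1)/2
private def G16 (x : ℝ) : ℝ :=
  (2 + min 0 (-x) + (x-1)/2) * (hi16 x - lo16 x) - (lo16 x)^2/4 - (hi16 x)^2/4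

private lemma hasDeriv16 (A B C y : ℝ) :
    HasDerivAt (fun t : ℝ => A*t + B*t^2/2 + C*t^3/3) (A + B*y + C*y^2) y := by
  have h1 : HasDerivAt (fun t : ℝ => A*t + B*t^2/2 + C*t^3/3)
      (A*1 + B*(2*y^1)/2 + C*(3*y^2)/3) y :=
    (((hasDerivAt_id y).const_mul A).add
      (((hasDerivAt_pow 2 y).const_mul B).div_const 2)).add
      (((hasDerivAt_pow 3 y).const_mul C).div_const 3)
  convert h1 using 1
  ring

private lemma int_quad16 (A B C a b : ℝ) :
    ∫ y in a..b, (A + B*y + C*y^2) =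
      (A*b + B*b^2/2 + C*b^3/3) - (A*a + B*a^2/2 + C*a^3/3) := by
  apply intervalIntegral.integral_eq_sub_of_hasDerivAt
  · exact fun y _ => hasDeriv16 A B C y
  · apply Continuous.intervalIntegrable
    fun_prop

private lemma seg16 {x lo hi y : ℝ} (h1 : lo ≤ y) (h2 : y ≤ hi) :
    ((x, y) : ℝ × ℝ) ∈ segment ℝ (x, lo) (x, hi) := by
  rcases eq_or_lt_of_le (h1.trans h2) with h | h
  · have hy : y = lo := le_antisymm (h ▸ h2) h1
    subst hy
    exact left_mem_segment ℝ _ _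
  · have hne : hi - lo > 0 := by linarith
    refine ⟨(hi - y)/(hi - lo), (y - lo)/(hi - lo), div_nonneg (by linarith) (by linarith),
      div_nonneg (by linarith) (by linarith), ?_, ?_⟩
    · field_simp; ring
    · simp only [Prod.smul_mk, smul_eq_mul, Prod.mk_add_mk, Prod.mk.injEq]
      constructor <;> field_simp <;> ring

private lemma hull16 :
    convexHull ℝ ({((-3:ℝ),(0:ℝ)), (-2,1), (2,1), (3,0), (0,-3)} : Set (ℝ × ℝ)) = S16 := by
  apply Subset.antisymm
  · apply convexHull_min
    · intro p hp
      simp only [mem_insert_iff, mem_singleton_iff] at hp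
      rcases hp with h|h|h|h|h <;> subst h <;>
        exact ⟨by norm_num, by norm_num, by norm_num, by norm_num, by norm_num⟩
    · intro p hp q hq a b ha hb hab
      obtain ⟨hp1, hp2, hp3, hp4, hp5⟩ := hp
      obtain ⟨hq1, hq2, hq3, hq4, hq5⟩ := hq
      simp only [S16, mem_setOf_eq, Prod.fst_add, Prod.snd_add, Prod.smul_fst, Prod.smul_snd,
        smul_eq_mul]
      refine ⟨?_, ?_, ?_, ?_, ?_⟩ <;>
        nlinarith [mul_le_mul_of_nonneg_left hp1 ha, mul_le_mul_of_nonneg_left hq1 hb,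
          mul_le_mul_of_nonneg_left hp2 ha, mul_le_mul_of_nonneg_left hq2 hb,
          mul_le_mul_of_nonneg_left hp3 ha, mul_le_mul_of_nonneg_left hq3 hb,
          mul_le_mul_of_nonneg_left hp4 ha, mul_le_mul_of_nonneg_left hq4 hb,
          mul_le_mul_of_nonneg_left hp5 ha, mul_le_mul_of_nonneg_left hq5 hb]
  · rintro ⟨x, y⟩ ⟨h1, h2, h3, h4, h5⟩
    set V : Set (ℝ × ℝ) := {((-3:ℝ),(0:ℝ)), (-2,1), (2,1), (3,0), (0,-3)} with hV
    have hcv : Convex ℝ (convexHull ℝ V) := convex_convexHull ℝ V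
    have hv1 : ((-3:ℝ),(0:ℝ)) ∈ V := by simp [hV]
    have hv2 : ((-2:ℝ),(1:ℝ)) ∈ V := by simp [hV]
    have hv3 : ((2:ℝ),(1:ℝ)) ∈ V := by simp [hV]
    have hv4 : ((3:ℝ),(0:ℝ)) ∈ V := by simp [hV]
    have hv5 : ((0:ℝ),(-3:ℝ)) ∈ V := by simp [hV]
    have hx3 : -3 ≤ x := by linarith
    have hx3' : x ≤ 3 := by linarith
    obtain ⟨yl, hyl, hL⟩ : ∃ yl, yl ≤ y ∧ ((x, yl) : ℝ × ℝ) ∈ convexHull ℝ V := by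
      rcases le_total x 0 with hx | hx
      · refine ⟨-x-3, h2, segment_subset_convexHull hv1 hv5 ?_⟩
        refine ⟨-x/3, (x+3)/3, by linarith, by linarith, by ring, ?_⟩
        simp only [Prod.smul_mk, smul_eq_mul, Prod.mk_add_mk, Prod.mk.injEq]
        constructor <;> ring
      · refine ⟨x-3, h1, segment_subset_convexHull hv5 hv4 ?_⟩
        refine ⟨(3-x)/3, x/3, by linarith, by linarith, by ring, ?_⟩
        simp only [Prod.smul_mk, smul_eq_mul, Prod.mk_add_mk, Prod.mk.injEq]
        constructor <;> ring
    obtain ⟨yh, hyh, hU⟩ : ∃ yh, y ≤ yh ∧ ((x, yh) : ℝ × ℝ) ∈ convexHull ℝ V := by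
      rcases le_total x (-2) with hx | hx
      · refine ⟨3+x, h5, segment_subset_convexHull hv1 hv2 ?_⟩
        refine ⟨-2-x, x+3, by linarith, by linarith, by ring, ?_⟩
        simp only [Prod.smul_mk, smul_eq_mul, Prod.mk_add_mk, Prod.mk.injEq]
        constructor <;> ring
      · rcases le_total x 2 with hx2 | hx2
        · refine ⟨1, h3, segment_subset_convexHull hv2 hv3 ?_⟩
          refine ⟨(2-x)/4, (x+2)/4, by linarith, by linarith, by ring, ?_⟩
          simp only [Prod.smul_mk, smul_eq_mul, Prod.mk_add_mk, Prod.mk.injEq]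
          constructor <;> ring
        · refine ⟨3-x, h4, segment_subset_convexHull hv3 hv4 ?_⟩
          refine ⟨3-x, x-2, by linarith, by linarith, by ring, ?_⟩
          simp only [Prod.smul_mk, smul_eq_mul, Prod.mk_add_mk, Prod.mk.injEq]
          constructor <;> ring
    exact hcv.segment_subset hL hU (seg16 hyl hyh)

private lemma meas16 : MeasurableSet S16 := by
  have : S16 = {p : ℝ × ℝ | p.1-3 ≤ p.2} ∩ ({p | -p.1-3 ≤ p.2} ∩ ({p | p.2 ≤ 1} ∩
      ({p | p.2 ≤ 3-p.1} ∩ {p | p.2 ≤ 3+p.1}))) := by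
    ext p; simp only [S16, mem_setOf_eq, mem_inter_iff]
  rw [this]
  exact (measurableSet_le (by fun_prop) (by fun_prop)).inter
    ((measurableSet_le (by fun_prop) (by fun_prop)).inter
    ((measurableSet_le (by fun_prop) (by fun_prop)).inter
    ((measurableSet_le (by fun_prop) (by fun_prop)).inter
    (measurableSet_le (by fun_prop) (by fun_prop)))))

private lemma fcont16 : Continuous f16 := by
  unfold f16; fun_prop

private lemma inner16 (x : ℝ) :
    (∫ y : ℝ, S16.indicator f16 (x, y)) = (Icc (-3:ℝ) 3).indicator G16 x := by
  have hiff : ∀ y : ℝ, ((x, y) ∈ S16) = (y ∈ Icc (lo16 x) (hi16 x)) := by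
    intro y
    apply propext
    simp only [S16, mem_setOf_eq, mem_Icc, lo16, hi16, max_le_iff, le_min_iff]
    tauto
  have hsect : ∀ y : ℝ, S16.indicator f16 (x, y)
      = (Icc (lo16 x) (hi16 x)).indicator (fun y => f16 (x, y)) y := by
    intro y
    classical
    rw [indicator_apply, indicator_apply, hiff]
    simp
  simp_rw [hsect]
  rw [integral_indicator measurableSet_Icc]
  by_cases hx : x ∈ Icc (-3:ℝ) 3
  · obtain ⟨hx1, hx2⟩ := hx
    have hlo0 : lo16 x ≤ 0 := max_le (by linarith) (by linarith)
    have hhi0 : (0:ℝ) ≤ hi16 x := le_min (by norm_num) (le_min (by linarith) (by linarith))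
    have hle : lo16 x ≤ hi16 x := hlo0.trans hhi0
    have hc : Continuous (fun y => f16 (x, y)) := by unfold f16; fun_prop
    rw [integral_Icc_eq_integral_Ioc, ← intervalIntegral.integral_of_le hle,
      ← intervalIntegral.integral_add_adjacent_intervals
        (hc.intervalIntegrable (lo16 x) 0) (hc.intervalIntegrable 0 (hi16 x))]
    have e1 : (∫ y in lo16 x..(0:ℝ), f16 (x, y))
        = ∫ y in lo16 x..(0:ℝ), ((2 + min 0 (-x) + (x-1)/2) + (1/2:ℝ)*y + (0:ℝ)*y^2) := by
      apply intervalIntegral.integral_congr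
      intro y hy
      rw [uIcc_of_le hlo0] at hy
      simp only [f16]
      rw [min_eq_right hy.2]
      ring
    have e2 : (∫ y in (0:ℝ)..hi16 x, f16 (x, y))
        = ∫ y in (0:ℝ)..hi16 x, ((2 + min 0 (-x) + (x-1)/2) + (-1/2:ℝ)*y + (0:ℝ)*y^2) := by
      apply intervalIntegral.integral_congr
      intro y hy
      rw [uIcc_of_le hhi0] at hy
      simp only [f16]
      rw [min_eq_left hy.1]
      ring
    rw [e1, e2, int_quad16, int_quad16, indicator_of_mem (mem_Icc.mpr ⟨hx1, hx2⟩)]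
    unfold G16
    ring
  · rw [indicator_of_notMem hx]
    have hxr : x < -3 ∨ 3 < x := by
      rcases lt_or_ge x (-3) with h | h
      · exact Or.inl h
      · right
        by_contra hcon
        exact hx ⟨h, le_of_not_gt hcon⟩
    have hemp : Icc (lo16 x) (hi16 x) = ∅ := by
      apply Icc_eq_empty
      intro hcon
      rcases hxr with h | h
      · have a1 : hi16 x ≤ 3+x := (min_le_right _ _).trans (min_le_right _ _)
        have a2 : -x-3 ≤ lo16 x := le_max_right _ _
        linarith
      · have a1 : hi16 x ≤ 3-x := (min_le_right _ _).trans (min_le_left _ _)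
        have a2 : x-3 ≤ lo16 x := le_max_left _ _
        linarith
    rw [hemp]
    simp

private lemma key16 : (∫ p in S16, f16 p) = 23/3 := by
  have hK : IsCompact S16 := hull16 ▸ (Set.Finite.isCompact_convexHull ℝ (Set.toFinite ({((-3:ℝ),(0:ℝ)), (-2,1), (2,1), (3,0), (0,-3)} : Set (ℝ × ℝ))))
  have hint : IntegrableOn f16 S16 volume := fcont16.continuousOn.integrableOn_compact hK
  have hInd : Integrable (S16.indicator f16) (volume.prod volume) := by
    rw [← Measure.volume_eq_prod]
    exact (integrable_indicator_iff meas16).mpr hint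
  have hGc : Continuous G16 := by unfold G16 lo16 hi16; fun_prop
  calc (∫ p in S16, f16 p) = ∫ p, S16.indicator f16 p := (integral_indicator meas16).symm
    _ = ∫ p, S16.indicator f16 p ∂(volume.prod volume) := by rw [← Measure.volume_eq_prod]
    _ = ∫ x, ∫ y, S16.indicator f16 (x, y) := integral_prod _ hInd
    _ = ∫ x, (Icc (-3:ℝ) 3).indicator G16 x := by simp_rw [inner16]
    _ = ∫ x in Icc (-3:ℝ) 3, G16 x := integral_indicator measurableSet_Icc
    _ = ∫ x in (-3:ℝ)..3, G16 x := by
        rw [integral_Icc_eq_integral_Ioc, ← intervalIntegral.integral_of_le (by norm_num)]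
    _ = 23/3 := by
        rw [← intervalIntegral.integral_add_adjacent_intervals
            (hGc.intervalIntegrable (-3) (-2)) (hGc.intervalIntegrable (-2) 3),
          ← intervalIntegral.integral_add_adjacent_intervals
            (hGc.intervalIntegrable (-2) 0) (hGc.intervalIntegrable 0 3),
          ← intervalIntegral.integral_add_adjacent_intervals
            (hGc.intervalIntegrable 0 2) (hGc.intervalIntegrable 2 3)]
        have p1 : (∫ x in (-3:ℝ)..(-2), G16 x)
            = ∫ x in (-3:ℝ)..(-2), ((9/2:ℝ) + 3*x + (1/2)*x^2) := by
          apply intervalIntegral.integral_congr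
          intro x hx
          rw [uIcc_of_le (by norm_num)] at hx
          obtain ⟨ha, hb⟩ := hx
          unfold G16 lo16 hi16
          rw [min_eq_left (by linarith : (0:ℝ) ≤ -x),
            max_eq_right (by linarith : (x-3:ℝ) ≤ -x-3),
            min_eq_right (by linarith : (3+x:ℝ) ≤ 3-x),
            min_eq_right (by linarith : (3+x:ℝ) ≤ 1)]
          ring
        have p2 : (∫ x in (-2:ℝ)..0, G16 x)
            = ∫ x in (-2:ℝ)..0, ((7/2:ℝ) + 2*x + (1/4)*x^2) := by
          apply intervalIntegral.integral_congr
          intro x hx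
          rw [uIcc_of_le (by norm_num)] at hx
          obtain ⟨ha, hb⟩ := hx
          unfold G16 lo16 hi16
          rw [min_eq_left (by linarith : (0:ℝ) ≤ -x),
            max_eq_right (by linarith : (x-3:ℝ) ≤ -x-3),
            min_eq_right (by linarith : (3+x:ℝ) ≤ 3-x),
            min_eq_left (by linarith : (1:ℝ) ≤ 3+x)]
          ring
        have p3 : (∫ x in (0:ℝ)..2, G16 x)
            = ∫ x in (0:ℝ)..2, ((7/2:ℝ) + (-2)*x + (1/4)*x^2) := by
          apply intervalIntegral.integral_congr
          intro x hx
          rw [uIcc_of_le (by norm_num)] at hx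
          obtain ⟨ha, hb⟩ := hx
          unfold G16 lo16 hi16
          rw [min_eq_right (by linarith : (-x:ℝ) ≤ 0),
            max_eq_left (by linarith : (-x-3:ℝ) ≤ x-3),
            min_eq_left (by linarith : (3-x:ℝ) ≤ 3+x),
            min_eq_left (by linarith : (1:ℝ) ≤ 3-x)]
          ring
        have p4 : (∫ x in (2:ℝ)..3, G16 x)
            = ∫ x in (2:ℝ)..3, ((9/2:ℝ) + (-3)*x + (1/2)*x^2) := by
          apply intervalIntegral.integral_congr
          intro x hx
          rw [uIcc_of_le (by norm_num)] at hx
          obtain ⟨ha, hb⟩ := hx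
          unfold G16 lo16 hi16
          rw [min_eq_right (by linarith : (-x:ℝ) ≤ 0),
            max_eq_left (by linarith : (-x-3:ℝ) ≤ x-3),
            min_eq_left (by linarith : (3-x:ℝ) ≤ 3+x),
            min_eq_right (by linarith : (3-x:ℝ) ≤ 1)]
          ring
        rw [p1, p2, p3, p4, int_quad16, int_quad16, int_quad16, int_quad16]
        norm_num

end

theorem stmt16 :
    (∫ u in convexHull ℝ {((-3:ℝ),(0:ℝ)), (-2,1), (2,1), (3,0), (0,-3)},
        (2 + min 0 (-u.1) + min 0 u.2 + (u.1 - u.2 - 1)/2)) = 23/3 := by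
  rw [hull16]
  exact key16
end

section
/- Let F(ξ) = ∫_{−1}^{2} u · (2 + min(−u,0) + 2(u−2)/3) · e^{ξu} du. Then F has a unique real zero ξ, and ξ ∈ (−0.971, −0.970). -/
open MeasureTheory

noncomputable def II (ξ : ℝ) : ℝ :=
  ∫ u in (-1:ℝ)..2, u * (2 + min (-u) 0 + 2*(u-2)/3) * Real.exp (ξ * u)

lemma cont_integrand (ξ : ℝ) :
    Continuous (fun u : ℝ => u * (2 + min (-u) 0 + 2*(u-2)/3) * Real.exp (ξ * u)) := by
  fun_prop

lemma intble (ξ : ℝ) (a b : ℝ) :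
    IntervalIntegrable (fun u : ℝ => u * (2 + min (-u) 0 + 2*(u-2)/3) * Real.exp (ξ * u))
      volume a b := (cont_integrand ξ).intervalIntegrable a b

-- derivative pieces
lemma deriv1 (ξ : ℝ) (hξ : ξ ≠ 0) (u : ℝ) :
    HasDerivAt (fun u : ℝ => Real.exp (ξ*u) * ((2*u^2+2*u)/(3*ξ) - (4*u+2)/(3*ξ^2) + 4/(3*ξ^3)))
      ((2*u^2+2*u)/3 * Real.exp (ξ*u)) u := by
  have hexp : HasDerivAt (fun u : ℝ => Real.exp (ξ*u)) (ξ * Real.exp (ξ*u)) u := by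
    simpa [mul_comm, Function.comp_def] using (Real.hasDerivAt_exp (ξ*u)).comp u ((hasDerivAt_id u).const_mul ξ)
  have hpoly : HasDerivAt (fun u : ℝ => (2*u^2+2*u)/(3*ξ) - (4*u+2)/(3*ξ^2) + 4/(3*ξ^3))
      ((4*u+2)/(3*ξ) - 4/(3*ξ^2)) u := by
    have h1 : HasDerivAt (fun u : ℝ => 2*u^2+2*u) (4*u+2) u := by
      have := ((hasDerivAt_pow 2 u).const_mul 2).add ((hasDerivAt_id u).const_mul 2)
      exact this.congr_deriv (by simp; ring)
    have h2 : HasDerivAt (fun u : ℝ => 4*u+2) 4 u := by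
      simpa using ((hasDerivAt_id u).const_mul 4).add_const 2
    exact ((h1.div_const (3*ξ)).sub (h2.div_const (3*ξ^2))).add_const _
  have := hexp.mul hpoly
  refine this.congr_deriv ?_
  field_simp
  ring

lemma deriv2 (ξ : ℝ) (hξ : ξ ≠ 0) (u : ℝ) :
    HasDerivAt (fun u : ℝ => Real.exp (ξ*u) * ((2*u - u^2)/(3*ξ) - (2-2*u)/(3*ξ^2) - 2/(3*ξ^3)))
      ((2*u - u^2)/3 * Real.exp (ξ*u)) u := by
  have hexp : HasDerivAt (fun u : ℝ => Real.exp (ξ*u)) (ξ * Real.exp (ξ*u)) u := by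
    simpa [mul_comm, Function.comp_def] using (Real.hasDerivAt_exp (ξ*u)).comp u ((hasDerivAt_id u).const_mul ξ)
  have hpoly : HasDerivAt (fun u : ℝ => (2*u - u^2)/(3*ξ) - (2-2*u)/(3*ξ^2) - 2/(3*ξ^3))
      ((2 - 2*u)/(3*ξ) - (-2)/(3*ξ^2)) u := by
    have h1 : HasDerivAt (fun u : ℝ => 2*u - u^2) (2 - 2*u) u := by
      have := ((hasDerivAt_id u).const_mul 2).sub (hasDerivAt_pow 2 u)
      exact this.congr_deriv (by simp)
    have h2 : HasDerivAt (fun u : ℝ => 2 - 2*u) (-2 : ℝ) u := by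
      have := (hasDerivAt_const u (2:ℝ)).sub ((hasDerivAt_id u).const_mul 2)
      exact this.congr_deriv (by simp)
    exact ((h1.div_const (3*ξ)).sub (h2.div_const (3*ξ^2))).sub_const _
  have := hexp.mul hpoly
  refine this.congr_deriv ?_
  field_simp
  ring

lemma II_eq (ξ : ℝ) (hξ : ξ ≠ 0) :
    II ξ = 2/(3*ξ^3) * (3 - Real.exp (-ξ) * (ξ+2) + Real.exp (2*ξ) * (ξ-1)) := by
  have hsplit : II ξ = (∫ u in (-1:ℝ)..0, u * (2 + min (-u) 0 + 2*(u-2)/3) * Real.exp (ξ * u))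
      + (∫ u in (0:ℝ)..2, u * (2 + min (-u) 0 + 2*(u-2)/3) * Real.exp (ξ * u)) :=
    (intervalIntegral.integral_add_adjacent_intervals (intble ξ _ _) (intble ξ _ _)).symm
  have e1 : (∫ u in (-1:ℝ)..0, u * (2 + min (-u) 0 + 2*(u-2)/3) * Real.exp (ξ * u))
      = ∫ u in (-1:ℝ)..0, (2*u^2+2*u)/3 * Real.exp (ξ*u) := by
    apply intervalIntegral.integral_congr
    intro u hu
    rw [Set.uIcc_of_le (by norm_num : (-1:ℝ) ≤ 0)] at hu
    have : min (-u) 0 = 0 := min_eq_right (by linarith [hu.2])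
    dsimp only; rw [this]; ring
  have e2 : (∫ u in (0:ℝ)..2, u * (2 + min (-u) 0 + 2*(u-2)/3) * Real.exp (ξ * u))
      = ∫ u in (0:ℝ)..2, (2*u - u^2)/3 * Real.exp (ξ*u) := by
    apply intervalIntegral.integral_congr
    intro u hu
    rw [Set.uIcc_of_le (by norm_num : (0:ℝ) ≤ 2)] at hu
    have : min (-u) 0 = -u := min_eq_left (by linarith [hu.1])
    dsimp only; rw [this]; ring
  have v1 : (∫ u in (-1:ℝ)..0, (2*u^2+2*u)/3 * Real.exp (ξ*u))
      = (Real.exp (ξ*0) * ((2*0^2+2*0)/(3*ξ) - (4*0+2)/(3*ξ^2) + 4/(3*ξ^3)))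
      - (Real.exp (ξ*(-1)) * ((2*(-1:ℝ)^2+2*(-1))/(3*ξ) - (4*(-1)+2)/(3*ξ^2) + 4/(3*ξ^3))) := by
    apply intervalIntegral.integral_eq_sub_of_hasDerivAt (fun u _ => deriv1 ξ hξ u)
    exact (Continuous.intervalIntegrable (by fun_prop) _ _)
  have v2 : (∫ u in (0:ℝ)..2, (2*u - u^2)/3 * Real.exp (ξ*u))
      = (Real.exp (ξ*2) * ((2*2 - (2:ℝ)^2)/(3*ξ) - (2-2*2)/(3*ξ^2) - 2/(3*ξ^3)))
      - (Real.exp (ξ*0) * ((2*0 - (0:ℝ)^2)/(3*ξ) - (2-2*0)/(3*ξ^2) - 2/(3*ξ^3))) := by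
    apply intervalIntegral.integral_eq_sub_of_hasDerivAt (fun u _ => deriv2 ξ hξ u)
    exact (Continuous.intervalIntegrable (by fun_prop) _ _)
  rw [hsplit, e1, e2, v1, v2]
  have hξ1 : ξ * (-1) = -ξ := by ring
  have hξ2 : ξ * 2 = 2 * ξ := by ring
  rw [hξ1, hξ2]
  simp only [mul_zero, Real.exp_zero]
  field_simp
  ring

lemma w_nonneg {u : ℝ} (h1 : -1 ≤ u) (h2 : u ≤ 2) : 0 ≤ 2 + min (-u) 0 + 2*(u-2)/3 := by
  rcases le_total u 0 with h | h
  · rw [min_eq_right (by linarith)]; linarith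
  · rw [min_eq_left (by linarith)]; linarith

lemma II_strictMono : StrictMono II := by
  intro a b hab
  have hd : II b - II a = ∫ u in (-1:ℝ)..2,
      (u * (2 + min (-u) 0 + 2*(u-2)/3) * Real.exp (b * u)
        - u * (2 + min (-u) 0 + 2*(u-2)/3) * Real.exp (a * u)) := by
    rw [II, II, ← intervalIntegral.integral_sub (intble b _ _) (intble a _ _)]
  have hcont : Continuous (fun u : ℝ =>
      u * (2 + min (-u) 0 + 2*(u-2)/3) * Real.exp (b * u)
        - u * (2 + min (-u) 0 + 2*(u-2)/3) * Real.exp (a * u)) :=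
    (cont_integrand b).sub (cont_integrand a)
  have hsplit : (∫ u in (-1:ℝ)..2,
      (u * (2 + min (-u) 0 + 2*(u-2)/3) * Real.exp (b * u)
        - u * (2 + min (-u) 0 + 2*(u-2)/3) * Real.exp (a * u)))
      = (∫ u in (-1:ℝ)..1,
      (u * (2 + min (-u) 0 + 2*(u-2)/3) * Real.exp (b * u)
        - u * (2 + min (-u) 0 + 2*(u-2)/3) * Real.exp (a * u)))
      + (∫ u in (1:ℝ)..2,
      (u * (2 + min (-u) 0 + 2*(u-2)/3) * Real.exp (b * u)
        - u * (2 + min (-u) 0 + 2*(u-2)/3) * Real.exp (a * u))) :=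
    (intervalIntegral.integral_add_adjacent_intervals
      (hcont.intervalIntegrable _ _) (hcont.intervalIntegrable _ _)).symm
  have key : ∀ u : ℝ, 0 ≤ u * (Real.exp (b*u) - Real.exp (a*u)) := by
    intro u
    rcases le_total 0 u with h | h
    · exact mul_nonneg h (sub_nonneg.2 (Real.exp_le_exp.2 (mul_le_mul_of_nonneg_right hab.le h)))
    · have := sub_nonpos.2 (Real.exp_le_exp.2 (mul_le_mul_of_nonpos_right hab.le h))
      nlinarith
  have h1 : 0 ≤ ∫ u in (-1:ℝ)..1,
      (u * (2 + min (-u) 0 + 2*(u-2)/3) * Real.exp (b * u)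
        - u * (2 + min (-u) 0 + 2*(u-2)/3) * Real.exp (a * u)) := by
    apply intervalIntegral.integral_nonneg (by norm_num)
    intro u hu
    have hw : 0 ≤ 2 + min (-u) 0 + 2*(u-2)/3 := w_nonneg hu.1 (by linarith [hu.2])
    have : u * (2 + min (-u) 0 + 2*(u-2)/3) * Real.exp (b * u)
        - u * (2 + min (-u) 0 + 2*(u-2)/3) * Real.exp (a * u)
        = (2 + min (-u) 0 + 2*(u-2)/3) * (u * (Real.exp (b*u) - Real.exp (a*u))) := by ring
    rw [this]
    exact mul_nonneg hw (key u)
  have h2 : 0 < ∫ u in (1:ℝ)..2,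
      (u * (2 + min (-u) 0 + 2*(u-2)/3) * Real.exp (b * u)
        - u * (2 + min (-u) 0 + 2*(u-2)/3) * Real.exp (a * u)) := by
    apply intervalIntegral.intervalIntegral_pos_of_pos_on (hcont.intervalIntegrable _ _)
      _ (by norm_num)
    intro u hu
    have hmin : min (-u) 0 = -u := min_eq_left (by linarith [hu.1])
    have hw : 0 < 2 + min (-u) 0 + 2*(u-2)/3 := by rw [hmin]; linarith [hu.2]
    have hexp : Real.exp (a*u) < Real.exp (b*u) :=
      Real.exp_lt_exp.2 (mul_lt_mul_of_pos_right hab (by linarith [hu.1]))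
    have : u * (2 + min (-u) 0 + 2*(u-2)/3) * Real.exp (b * u)
        - u * (2 + min (-u) 0 + 2*(u-2)/3) * Real.exp (a * u)
        = (2 + min (-u) 0 + 2*(u-2)/3) * (u * (Real.exp (b*u) - Real.exp (a*u))) := by ring
    rw [this]
    exact mul_pos hw (mul_pos (by linarith [hu.1]) (sub_pos.2 hexp))
  have : 0 < II b - II a := by rw [hd, hsplit]; linarith
  linarith
lemma exp_bounds1 : 2.64058 < Real.exp 0.971 ∧ Real.exp 0.971 < 2.64059 := by
  have h := Real.exp_bound (x := (0.971:ℝ)) (by rw [abs_of_nonneg] <;> norm_num)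
    (n := 13) (by norm_num)
  rw [show |(0.971:ℝ)| = 0.971 by rw [abs_of_nonneg] <;> norm_num, abs_le] at h
  obtain ⟨h1, h2⟩ := h
  norm_num [Finset.sum_range_succ, Nat.factorial] at h1 h2
  constructor <;> linarith

lemma exp_bounds2 : 2.63794 < Real.exp 0.970 ∧ Real.exp 0.970 < 2.63795 := by
  have h := Real.exp_bound (x := (0.970:ℝ)) (by rw [abs_of_nonneg] <;> norm_num)
    (n := 13) (by norm_num)
  rw [show |(0.970:ℝ)| = 0.970 by rw [abs_of_nonneg] <;> norm_num, abs_le] at h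
  obtain ⟨h1, h2⟩ := h
  norm_num [Finset.sum_range_succ, Nat.factorial] at h1 h2
  constructor <;> linarith

lemma II_neg : II (-0.971) < 0 := by
  rw [II_eq _ (by norm_num)]
  have hE := exp_bounds1
  have hEpos : 0 < Real.exp 0.971 := Real.exp_pos _
  have e1 : Real.exp (-(-0.971:ℝ)) = Real.exp 0.971 := by norm_num
  have e2 : Real.exp (2*(-0.971:ℝ)) = (Real.exp 0.971 * Real.exp 0.971)⁻¹ := by
    rw [← Real.exp_add, ← Real.exp_neg]; norm_num
  rw [e1, e2]
  have hinv : (Real.exp 0.971 * Real.exp 0.971)⁻¹ ≤ ((2.64058:ℝ) * 2.64058)⁻¹ := by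
    apply inv_anti₀ (by norm_num)
    nlinarith [hE.1]
  apply mul_neg_of_neg_of_pos (by norm_num)
  nlinarith [hE.2, hinv]

lemma II_pos : 0 < II (-0.970) := by
  rw [II_eq _ (by norm_num)]
  have hE := exp_bounds2
  have hEpos : 0 < Real.exp 0.970 := Real.exp_pos _
  have e1 : Real.exp (-(-0.970:ℝ)) = Real.exp 0.970 := by norm_num
  have e2 : Real.exp (2*(-0.970:ℝ)) = (Real.exp 0.970 * Real.exp 0.970)⁻¹ := by
    rw [← Real.exp_add, ← Real.exp_neg]; norm_num
  rw [e1, e2]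
  have hinv : ((2.63795:ℝ) * 2.63795)⁻¹ ≤ (Real.exp 0.970 * Real.exp 0.970)⁻¹ := by
    apply inv_anti₀ (by positivity)
    nlinarith [hE.2]
  apply mul_pos_of_neg_of_neg (by norm_num)
  nlinarith [hE.1, hinv]

lemma II_contOn : ContinuousOn II (Set.Icc (-0.971:ℝ) (-0.970)) := by
  have hg : ContinuousOn
      (fun ξ : ℝ => 2/(3*ξ^3) * (3 - Real.exp (-ξ) * (ξ+2) + Real.exp (2*ξ) * (ξ-1)))
      (Set.Icc (-0.971:ℝ) (-0.970)) := by
    apply ContinuousOn.mul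
    · apply ContinuousOn.div continuousOn_const (by fun_prop)
      intro x hx
      have hx0 : x < 0 := lt_of_le_of_lt hx.2 (by norm_num)
      have hx2 : 0 < x*x := mul_pos_of_neg_of_neg hx0 hx0
      have h3 : x^3 < 0 := by nlinarith
      intro hc
      nlinarith
    · fun_prop
  apply ContinuousOn.congr hg
  intro x hx
  have hx0 : x ≠ 0 := by
    have : x < 0 := lt_of_le_of_lt hx.2 (by norm_num)
    exact ne_of_lt this
  exact II_eq x hx0

theorem stmt17 :
    (∃! ξ : ℝ, (∫ u in (-1:ℝ)..2, u * (2 + min (-u) 0 + 2*(u-2)/3) * Real.exp (ξ * u)) = 0) ∧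
    ∀ ξ : ℝ, (∫ u in (-1:ℝ)..2, u * (2 + min (-u) 0 + 2*(u-2)/3) * Real.exp (ξ * u)) = 0 →
      ξ ∈ Set.Ioo (-0.971 : ℝ) (-0.970) := by
  have hII : ∀ ξ : ℝ, (∫ u in (-1:ℝ)..2, u * (2 + min (-u) 0 + 2*(u-2)/3) * Real.exp (ξ * u))
      = II ξ := fun _ => rfl
  have hmem : ∀ ξ : ℝ, II ξ = 0 → ξ ∈ Set.Ioo (-0.971 : ℝ) (-0.970) := by
    intro ξ hξ
    constructor
    · by_contra hle
      push_neg at hle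
      have := II_strictMono.monotone hle
      rw [hξ] at this
      linarith [II_neg]
    · by_contra hle
      push_neg at hle
      have := II_strictMono.monotone hle
      rw [hξ] at this
      linarith [II_pos]
  have hex : ∃ ξ ∈ Set.Icc (-0.971:ℝ) (-0.970), II ξ = 0 := by
    have h := intermediate_value_Icc (by norm_num : (-0.971:ℝ) ≤ -0.970) II_contOn
    have h0 : (0:ℝ) ∈ Set.Icc (II (-0.971)) (II (-0.970)) :=
      ⟨le_of_lt II_neg, le_of_lt II_pos⟩
    obtain ⟨ξ, hξmem, hξ⟩ := h h0
    exact ⟨ξ, hξmem, hξ⟩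
  obtain ⟨ξ₀, _, hξ₀⟩ := hex
  constructor
  · refine ⟨ξ₀, ?_, ?_⟩
    · show (∫ u in (-1:ℝ)..2, u * (2 + min (-u) 0 + 2*(u-2)/3) * Real.exp (ξ₀ * u)) = 0
      rw [hII]; exact hξ₀
    · intro y hy
      rw [hII] at hy
      exact II_strictMono.injective (hy.trans hξ₀.symm)
  · intro ξ hξ
    rw [hII] at hξ
    exact hmem ξ hξ
end

section
/- Let F(ξ) = ∫_{−1}^{1} u · (u+1)/2 · e^{ξu} du. Then F has a unique real zero ξ, and ξ ∈ (−1.345, −1.343). -/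
open MeasureTheory

noncomputable def Gfun (x : ℝ) : ℝ := Real.exp (2*x) * (2*x^2 - 3*x + 2) - (x + 2)

lemma contG : Continuous Gfun := by unfold Gfun; fun_prop

lemma exp_ge4 {y : ℝ} (hy : 0 ≤ y) : 1 + y + y^2/2 + y^3/6 ≤ Real.exp y := by
  have h := Real.sum_le_exp_of_nonneg hy 4
  norm_num [Finset.sum_range_succ, Nat.factorial] at h
  linarith

lemma exp_ge5 {y : ℝ} (hy : 0 ≤ y) : 1 + y + y^2/2 + y^3/6 + y^4/24 ≤ Real.exp y := by
  have h := Real.sum_le_exp_of_nonneg hy 5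
  norm_num [Finset.sum_range_succ, Nat.factorial] at h
  linarith

lemma exp_ge6 {y : ℝ} (hy : 0 ≤ y) :
    1 + y + y^2/2 + y^3/6 + y^4/24 + y^5/120 ≤ Real.exp y := by
  have h := Real.sum_le_exp_of_nonneg hy 6
  norm_num [Finset.sum_range_succ, Nat.factorial] at h
  linarith

lemma G_pos_of_pos {x : ℝ} (hx : 0 < x) : 0 < Gfun x := by
  have hy : (0:ℝ) ≤ 2*x := by linarith
  have h := exp_ge4 hy
  have hq : (0:ℝ) < 2*x^2 - 3*x + 2 := by nlinarith [sq_nonneg (2*x - 3)]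
  have key : (1 + 2*x + (2*x)^2/2 + (2*x)^3/6) * (2*x^2 - 3*x + 2)
      ≤ Real.exp (2*x) * (2*x^2 - 3*x + 2) :=
    mul_le_mul_of_nonneg_right h hq.le
  unfold Gfun
  nlinarith [pow_pos hx 3, pow_pos hx 5]

lemma G_neg_mid {x : ℝ} (h1 : -1 < x) (h0 : x < 0) : Gfun x < 0 := by
  have hy : (0:ℝ) ≤ -2*x := by linarith
  have hE := exp_ge5 hy
  have hEpos : 0 < Real.exp (-2*x) := Real.exp_pos _
  have hee : Real.exp (2*x) * Real.exp (-2*x) = 1 := by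
    rw [← Real.exp_add]; norm_num
  have hq : 2*x^2 - 3*x + 2 < (x+2) * Real.exp (-2*x) := by
    have hS : 2*x^2 - 3*x + 2 < (x+2) * (1 + (-2*x) + (-2*x)^2/2 + (-2*x)^3/6 + (-2*x)^4/24) := by
      have key : (x+2) * (1 + (-2*x) + (-2*x)^2/2 + (-2*x)^3/6 + (-2*x)^4/24) - (2*x^2 - 3*x + 2)
          = (2/3)*((-x)^3*(1-x^2)) := by ring
      have hpos : 0 < (-x)^3*(1-x^2) :=
        mul_pos (pow_pos (by linarith) 3) (by nlinarith)
      linarith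
    have : (x+2) * (1 + (-2*x) + (-2*x)^2/2 + (-2*x)^3/6 + (-2*x)^4/24)
        ≤ (x+2) * Real.exp (-2*x) := by
      apply mul_le_mul_of_nonneg_left hE (by linarith)
    linarith
  unfold Gfun
  nlinarith [mul_lt_mul_of_pos_left hq (Real.exp_pos (2*x))]

lemma G_hasDeriv (x : ℝ) :
    HasDerivAt Gfun (Real.exp (2*x) * (4*x^2 - 2*x + 1) - 1) x := by
  have h1 : HasDerivAt (fun x : ℝ => Real.exp (2*x)) (Real.exp (2*x) * 2) x := by
    simpa using ((hasDerivAt_id x).const_mul (2:ℝ)).exp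
  have h2 : HasDerivAt (fun x : ℝ => 2*x^2 - 3*x + 2) (2*(2*x) - 3) x := by
    have ha : HasDerivAt (fun x : ℝ => 2*x^2) (2*(2*x)) x := by
      simpa using ((hasDerivAt_pow 2 x).const_mul (2:ℝ))
    have hb : HasDerivAt (fun x : ℝ => 3*x) (3:ℝ) x := by
      simpa using (hasDerivAt_id x).const_mul (3:ℝ)
    simpa using (ha.sub hb).add_const 2
  have h3 : HasDerivAt (fun x : ℝ => x + 2) 1 x := (hasDerivAt_id x).add_const 2
  have := (h1.mul h2).sub h3
  refine this.congr_deriv ?_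
  ring

lemma G_anti : StrictAntiOn Gfun (Set.Iic (-1 : ℝ)) := by
  apply strictAntiOn_of_deriv_neg (convex_Iic _)
  · exact (by unfold Gfun; fun_prop : Continuous Gfun).continuousOn
  · intro x hx
    rw [interior_Iic] at hx
    have hx' : x < -1 := hx
    rw [(G_hasDeriv x).deriv]
    have hy : (0:ℝ) ≤ -2*x := by linarith
    have hE := exp_ge6 hy
    have hEpos : 0 < Real.exp (-2*x) := Real.exp_pos _
    have hee : Real.exp (2*x) * Real.exp (-2*x) = 1 := by
      rw [← Real.exp_add]; norm_num
    have hq : 4*x^2 - 2*x + 1 < Real.exp (-2*x) := by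
      have : 4*x^2 - 2*x + 1 < 1 + (-2*x) + (-2*x)^2/2 + (-2*x)^3/6 + (-2*x)^4/24 + (-2*x)^5/120 := by
        nlinarith [pow_pos (show (0:ℝ) < -x by linarith) 3,
          pow_pos (show (0:ℝ) < -x by linarith) 5, sq_nonneg (x+1)]
      linarith
    nlinarith [mul_lt_mul_of_pos_left hq (Real.exp_pos (2*x))]

lemma exp_upper : Real.exp 2.69 < 9.65305/0.655 := by
  have h4 : Real.exp 2.69 = (Real.exp 0.6725)^4 := by
    rw [← Real.exp_nat_mul]; norm_num
  have hb := Real.exp_bound' (x := 0.6725) (by norm_num) (by norm_num) (n := 8) (by norm_num)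
  rw [h4]
  have hS : (∑ m ∈ Finset.range 8, (0.6725:ℝ) ^ m / m.factorial) +
      (0.6725:ℝ) ^ 8 * (8 + 1) / ((8: ℕ).factorial * 8) ≤ 1.9592 := by
    norm_num [Finset.sum_range_succ, Nat.factorial]
  have h1 : Real.exp 0.6725 ≤ 1.9592 := le_trans hb hS
  calc (Real.exp 0.6725)^4 ≤ (1.9592:ℝ)^4 := by
        apply pow_le_pow_left₀ (Real.exp_pos _).le h1
    _ < 9.65305/0.655 := by norm_num

lemma exp_lower : 9.636298/0.657 < Real.exp 2.686 := by
  have h4 : Real.exp 2.686 = (Real.exp 0.6715)^4 := by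
    rw [← Real.exp_nat_mul]; norm_num
  have hb := Real.sum_le_exp_of_nonneg (x := 0.6715) (by norm_num) 8
  have hS : (1.957169:ℝ) ≤ ∑ m ∈ Finset.range 8, (0.6715:ℝ) ^ m / m.factorial := by
    norm_num [Finset.sum_range_succ, Nat.factorial]
  have h1 : (1.957169:ℝ) ≤ Real.exp 0.6715 := le_trans hS hb
  rw [h4]
  calc (9.636298:ℝ)/0.657 < (1.957169:ℝ)^4 := by norm_num
    _ ≤ (Real.exp 0.6715)^4 := by apply pow_le_pow_left₀ (by norm_num) h1

lemma G_a : 0 < Gfun (-1.345) := by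
  unfold Gfun
  have h : (2:ℝ) * (-1.345) = -2.69 := by norm_num
  rw [h, Real.exp_neg]
  have hE : (0:ℝ) < Real.exp 2.69 := Real.exp_pos _
  have := exp_upper
  rw [lt_div_iff₀ (by norm_num)] at this
  have h2 : (0.655:ℝ) < 9.65305 / Real.exp 2.69 := by
    rw [lt_div_iff₀ hE]; nlinarith
  have h3 : (9.65305:ℝ) / Real.exp 2.69 = (Real.exp 2.69)⁻¹ * 9.65305 := by
    field_simp
  nlinarith [h2, h3]

lemma G_b : Gfun (-1.343) < 0 := by
  unfold Gfun
  have h : (2:ℝ) * (-1.343) = -2.686 := by norm_num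
  rw [h, Real.exp_neg]
  have hE : (0:ℝ) < Real.exp 2.686 := Real.exp_pos _
  have := exp_lower
  rw [div_lt_iff₀ (by norm_num)] at this
  have h2 : (Real.exp 2.686)⁻¹ * 9.636298 < 0.657 := by
    rw [inv_mul_eq_div, div_lt_iff₀ hE]; nlinarith
  have hq : (2 * (-1.343:ℝ)^2 - 3 * (-1.343) + 2) = 9.636298 := by norm_num
  have hq2 : ((-1.343:ℝ) + 2) = 0.657 := by norm_num
  rw [hq, hq2]
  linarith

lemma F_eq (ξ : ℝ) (hξ : ξ ≠ 0) :
    (∫ u in (-1:ℝ)..1, u * ((u+1)/2) * Real.exp (ξ * u))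
      = Real.exp (-ξ) * Gfun ξ / (2*ξ^3) := by
  have hderiv : ∀ u ∈ Set.uIcc (-1:ℝ) 1,
      HasDerivAt (fun u => Real.exp (ξ*u) * ((u^2+u)/(2*ξ) - (2*u+1)/(2*ξ^2) + 1/ξ^3))
        (u * ((u+1)/2) * Real.exp (ξ * u)) u := by
    intro u _
    have h1 : HasDerivAt (fun u : ℝ => Real.exp (ξ*u)) (Real.exp (ξ*u) * ξ) u := by
      simpa [mul_comm, Function.comp_def] using (Real.hasDerivAt_exp (ξ*u)).comp u ((hasDerivAt_id u).const_mul ξ)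
    have h2 : HasDerivAt (fun u : ℝ => (u^2+u)/(2*ξ) - (2*u+1)/(2*ξ^2) + 1/ξ^3)
        ((2*u+1)/(2*ξ) - 2/(2*ξ^2)) u := by
      have ha : HasDerivAt (fun u : ℝ => (u^2+u)/(2*ξ)) ((2*u+1)/(2*ξ)) u := by
        have : HasDerivAt (fun u : ℝ => u^2+u) (2*u+1) u := by
          exact ((hasDerivAt_pow 2 u).add (hasDerivAt_id' u)).congr_deriv (by norm_num)
        simpa only [div_eq_mul_inv] using this.mul_const (2*ξ)⁻¹
      have hb : HasDerivAt (fun u : ℝ => (2*u+1)/(2*ξ^2)) (2/(2*ξ^2)) u := by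
        have : HasDerivAt (fun u : ℝ => 2*u+1) 2 u := by
          simpa using ((hasDerivAt_id u).const_mul (2:ℝ)).add_const 1
        simpa only [div_eq_mul_inv] using this.mul_const (2*ξ^2)⁻¹
      exact (ha.sub hb).add_const (1/ξ^3)
    have := h1.mul h2
    refine this.congr_deriv ?_
    field_simp
    ring
  have hint : IntervalIntegrable (fun u => u * ((u+1)/2) * Real.exp (ξ * u)) volume (-1) 1 :=
    (Continuous.intervalIntegrable (by fun_prop) _ _)
  rw [intervalIntegral.integral_eq_sub_of_hasDerivAt hderiv hint]
  have he : Real.exp ξ ≠ 0 := Real.exp_ne_zero ξ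
  have h2ξ : Real.exp (2*ξ) = Real.exp ξ * Real.exp ξ := by
    rw [two_mul, Real.exp_add]
  have hneg : Real.exp (-ξ) = (Real.exp ξ)⁻¹ := Real.exp_neg ξ
  have hone : Real.exp (ξ * 1) = Real.exp ξ := by norm_num
  have hmone : Real.exp (ξ * (-1)) = (Real.exp ξ)⁻¹ := by
    rw [← Real.exp_neg]; ring_nf
  rw [hone, hmone]
  unfold Gfun
  rw [h2ξ, hneg]
  field_simp
  ring

lemma F_zero : (∫ u in (-1:ℝ)..1, u * ((u+1)/2) * Real.exp ((0:ℝ) * u)) = 1/3 := by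
  have hderiv : ∀ u ∈ Set.uIcc (-1:ℝ) 1,
      HasDerivAt (fun u : ℝ => u^3/6 + u^2/4)
        (u * ((u+1)/2) * Real.exp ((0:ℝ) * u)) u := by
    intro u _
    have : HasDerivAt (fun u : ℝ => u^3/6 + u^2/4) (3*u^2/6 + 2*u/4) u := by
      have h3 : HasDerivAt (fun u : ℝ => u^3/6) (3*u^2/6) u := by
        simpa [div_eq_mul_inv] using (hasDerivAt_pow 3 u).mul_const (6:ℝ)⁻¹
      have h2 : HasDerivAt (fun u : ℝ => u^2/4) (2*u/4) u := by
        simpa [div_eq_mul_inv] using (hasDerivAt_pow 2 u).mul_const (4:ℝ)⁻¹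
      exact h3.add h2
    convert this using 1
    simp [Real.exp_zero]
    ring
  have hint : IntervalIntegrable (fun u => u * ((u+1)/2) * Real.exp ((0:ℝ) * u)) volume (-1) 1 :=
    (Continuous.intervalIntegrable (by fun_prop) _ _)
  rw [intervalIntegral.integral_eq_sub_of_hasDerivAt hderiv hint]
  norm_num


theorem stmt18 :
    (∃! ξ : ℝ, (∫ u in (-1:ℝ)..1, u * ((u+1)/2) * Real.exp (ξ * u)) = 0) ∧
    ∀ ξ : ℝ, (∫ u in (-1:ℝ)..1, u * ((u+1)/2) * Real.exp (ξ * u)) = 0 →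
      ξ ∈ Set.Ioo (-1.345 : ℝ) (-1.343) := by
  have hzero : ∀ ξ : ℝ, (∫ u in (-1:ℝ)..1, u * ((u+1)/2) * Real.exp (ξ * u)) = 0
      ↔ (ξ ≠ 0 ∧ Gfun ξ = 0) := by
    intro ξ
    constructor
    · intro h
      rcases eq_or_ne ξ 0 with h0 | h0
      · rw [h0, F_zero] at h; norm_num at h
      · refine ⟨h0, ?_⟩
        rw [F_eq ξ h0] at h
        have h3 : (2:ℝ)*ξ^3 ≠ 0 := mul_ne_zero two_ne_zero (pow_ne_zero _ h0)
        rw [div_eq_zero_iff] at h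
        rcases h with h | h
        · rcases mul_eq_zero.mp h with h | h
          · exact absurd h (Real.exp_ne_zero _)
          · exact h
        · exact absurd h h3
    · rintro ⟨h0, hG⟩
      rw [F_eq ξ h0, hG]
      simp
  have hmem : ∀ ξ : ℝ, (∫ u in (-1:ℝ)..1, u * ((u+1)/2) * Real.exp (ξ * u)) = 0 →
      ξ ∈ Set.Ioo (-1.345 : ℝ) (-1.343) := by
    intro ξ h
    obtain ⟨h0, hG⟩ := (hzero ξ).1 h
    by_contra hc
    rw [Set.mem_Ioo, not_and_or, not_lt, not_lt] at hc
    rcases lt_trichotomy ξ 0 with hneg | h0' | hpos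
    · rcases le_or_gt ξ (-1) with hle | hgt
      · have hmemI : ξ ∈ Set.Iic (-1:ℝ) := hle
        rcases hc with hc | hc
        · rcases eq_or_lt_of_le hc with he | hlt
          · have := G_a; rw [← he] at this; linarith [hG, this]
          · have := G_anti hmemI (by norm_num : (-1.345:ℝ) ∈ Set.Iic (-1:ℝ)) hlt
            have := G_a
            linarith
        · rcases eq_or_lt_of_le hc with he | hlt
          · have := G_b; rw [he] at this; linarith
          · have := G_anti (by norm_num : (-1.343:ℝ) ∈ Set.Iic (-1:ℝ)) hmemI hlt
            have := G_b
            linarith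
      · exact absurd hG (ne_of_lt (G_neg_mid hgt hneg))
    · exact h0 h0'
    · exact absurd hG.symm (ne_of_lt (G_pos_of_pos hpos))
  have hsub := intermediate_value_Ioo' (by norm_num : (-1.345:ℝ) ≤ -1.343)
    contG.continuousOn
  have h0mem : (0:ℝ) ∈ Set.Ioo (Gfun (-1.343)) (Gfun (-1.345)) := ⟨G_b, G_a⟩
  obtain ⟨ξ₀, hξ₀mem, hξ₀⟩ := hsub h0mem
  have hξ₀ne : ξ₀ ≠ 0 := by
    intro h; rw [h] at hξ₀mem; exact absurd hξ₀mem.2 (by norm_num)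
  have hFξ₀ : (∫ u in (-1:ℝ)..1, u * ((u+1)/2) * Real.exp (ξ₀ * u)) = 0 :=
    (hzero ξ₀).2 ⟨hξ₀ne, hξ₀⟩
  refine ⟨⟨ξ₀, hFξ₀, ?_⟩, hmem⟩
  intro ζ hζ
  have hζmem := hmem ζ hζ
  have hζG := ((hzero ζ).1 hζ).2
  have hIic : ∀ x : ℝ, x ∈ Set.Ioo (-1.345:ℝ) (-1.343) → x ∈ Set.Iic (-1:ℝ) := by
    intro x hx
    have := hx.2
    simp only [Set.mem_Iic]
    norm_num at this ⊢
    linarith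
  exact G_anti.injOn (hIic ζ hζmem) (hIic ξ₀ hξ₀mem) (hζG.trans hξ₀.symm)
end
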